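/- arXiv:2504.14859 — 6 statements merged into one kernel-verified Lean document; each statement's English description precedes it below -/
import Mathlib

section
/- Let F_0 be a field, F_1/F_0 a finite Galois extension, and F_2/F_0 a finite extension. Then the separable degrees satisfy [F_1 F_2 : F_0]_sep = [F_1 : F_0][F_2 : F_0]_sep / [F_1 ∩ F_2 : F_0]. -/
open IntermediateField Polynomial Module

set_option synthInstance.maxHeartbeats 1000000
set_option maxHeartbeats 2000000

/-- For a finite Galois extension `F₁/F₀` and a finite extension `F₂/F₀` inside a common
algebraic closure, the separable degrees satisfy
`[F₁F₂ : F₀]_sep · [F₁ ∩ F₂ : F₀] = [F₁ : F₀] · [F₂ : F₀]_sep`. -/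
theorem stmt_1 (F₀ : Type*) [Field F₀]
    (F₁ F₂ : IntermediateField F₀ (AlgebraicClosure F₀))
    [FiniteDimensional F₀ F₁] [FiniteDimensional F₀ F₂]
    [IsGalois F₀ F₁] :
    Field.finSepDegree F₀ ↥(F₁ ⊔ F₂) * Module.finrank F₀ ↥(F₁ ⊓ F₂) =
      Module.finrank F₀ F₁ * Field.finSepDegree F₀ F₂ := by
  classical
  set Ω := AlgebraicClosure F₀
  have h2E : F₂ ≤ F₁ ⊔ F₂ := le_sup_right
  have hK1 : F₁ ⊓ F₂ ≤ F₁ := inf_le_left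
  have hK2 : F₁ ⊓ F₂ ≤ F₂ := inf_le_right
  have hKE : F₁ ⊓ F₂ ≤ F₁ ⊔ F₂ := hK1.trans le_sup_left
  -- primitive element of F₁
  obtain ⟨α, hα⟩ := Field.exists_primitive_element F₀ ↥F₁
  set a : Ω := (α : Ω) with ha_def
  have hF₁a : F₀⟮a⟯ = F₁ := by
    rw [← lift_adjoin_simple (F := F₀) F₁ α, hα, lift_top]
  set p : Polynomial F₀ := minpoly F₀ a with hp_def
  have hpa : minpoly F₀ α = p := (minpoly.algebraMap_eq (algebraMap ↥F₁ Ω).injective α).symm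
  have hpsep : p.Separable := hpa ▸ Algebra.IsSeparable.isSeparable F₀ α
  have hpsplit₁ : (p.map (algebraMap F₀ ↥F₁)).Splits := hpa ▸ (IsGalois.to_normal (F := F₀) (E := ↥F₁)).splits α
  have hint : IsIntegral F₀ a := (IsIntegral.of_finite F₀ α).map (IsScalarTower.toAlgHom F₀ ↥F₁ Ω)
  have hp0 : p ≠ 0 := minpoly.ne_zero hint
  set S : Set Ω := p.rootSet Ω with hS_def
  have haS : a ∈ S := by
    rw [hS_def, Polynomial.mem_rootSet]
    exact ⟨hp0, minpoly.aeval F₀ a⟩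
  have hSF₁ : S ⊆ (F₁ : Set Ω) := by
    rw [hS_def, ← hpsplit₁.image_rootSet F₁.val]
    rintro _ ⟨x, -, rfl⟩
    exact x.2
  have hadj : adjoin F₀ S = F₁ := by
    refine le_antisymm (adjoin_le_iff.mpr hSF₁) ?_
    rw [← hF₁a]
    exact adjoin_simple_le_iff.mpr (subset_adjoin F₀ S haS)
  -- the polynomial over F₂
  set q : Polynomial ↥F₂ := p.map (algebraMap F₀ ↥F₂) with hq_def
  have hqS : q.rootSet Ω = S := by
    ext x
    simp only [hq_def, hS_def, Polynomial.mem_rootSet, Polynomial.aeval_map_algebraMap,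
      ne_eq, Polynomial.map_eq_zero_iff (algebraMap F₀ ↥F₂).injective]
  have hqsplits : (q.map (algebraMap ↥F₂ Ω)).Splits := by
    rw [hq_def, Polynomial.map_map, ← IsScalarTower.algebraMap_eq]
    exact IsAlgClosed.splits _
  have hqsep : q.Separable := hpsep.map
  -- the compositum as a splitting field over F₂
  set A : IntermediateField ↥F₂ Ω := adjoin ↥F₂ (q.rootSet Ω) with hA_def
  have hAE : extendScalars h2E = A := by
    apply restrictScalars_injective F₀
    rw [extendScalars_restrictScalars, hA_def, restrictScalars_adjoin_eq_sup, hqS, hadj, sup_comm]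
  haveI hspl : IsSplittingField ↥F₂ ↥A q := adjoin_rootSet_isSplittingField hqsplits
  haveI hfdA : FiniteDimensional ↥F₂ ↥A := IsSplittingField.finiteDimensional ↥A q
  haveI hgal : IsGalois ↥F₂ ↥A := IsGalois.of_separable_splitting_field hqsep
  -- F₁ embeds into A
  have h1A : ∀ x : Ω, x ∈ F₁ → x ∈ A := by
    intro x hx
    rw [← hAE]
    exact (le_sup_left : F₁ ≤ F₁ ⊔ F₂) hx
  letI : Algebra ↥F₁ ↥A := RingHom.toAlgebra
    { toFun := fun x => ⟨x.1, h1A x.1 x.2⟩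
      map_one' := rfl
      map_mul' := fun _ _ => rfl
      map_zero' := rfl
      map_add' := fun _ _ => rfl }
  letI : IsScalarTower F₀ ↥F₁ ↥A := IsScalarTower.of_algebraMap_eq fun x => rfl
  -- the restriction homomorphism
  let resF₀ : (↥A ≃ₐ[↥F₂] ↥A) →* (↥A ≃ₐ[F₀] ↥A) :=
    MonoidHom.mk' (AlgEquiv.restrictScalars F₀) fun _ _ => rfl
  let ρ : (↥A ≃ₐ[↥F₂] ↥A) →* (↥F₁ ≃ₐ[F₀] ↥F₁) :=
    (AlgEquiv.restrictNormalHom ↥F₁).comp resF₀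
  set H : Subgroup (↥F₁ ≃ₐ[F₀] ↥F₁) := ρ.range with hH_def
  -- fixed field of H is contained in (F₁ ⊓ F₂) ∩ F₁
  have hfixle : fixedField H ≤ (F₁ ⊓ F₂).comap F₁.val := by
    intro x hx
    have hfixA : ∀ σ : ↥A ≃ₐ[↥F₂] ↥A,
        σ (algebraMap ↥F₁ ↥A x) = algebraMap ↥F₁ ↥A x := by
      intro σ
      have h1 : ρ σ x = x := hx ⟨ρ σ, ⟨σ, rfl⟩⟩
      have h2 := AlgEquiv.restrictNormal_commutes (AlgEquiv.restrictScalars F₀ σ) ↥F₁ x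
      rw [show ((AlgEquiv.restrictScalars F₀ σ).restrictNormal ↥F₁) x = ρ σ x from rfl, h1] at h2
      exact h2.symm
    have hbot : algebraMap ↥F₁ ↥A x ∈ (⊥ : IntermediateField ↥F₂ ↥A) := by
      have htop : IntermediateField.fixingSubgroup (⊥ : IntermediateField ↥F₂ ↥A) = ⊤ := by
        refine le_antisymm le_top ?_
        intro σ _
        rintro ⟨y, hy⟩
        obtain ⟨c, rfl⟩ := IntermediateField.mem_bot.mp hy
        exact σ.commutes c
      have hff := IsGalois.fixedField_fixingSubgroup (⊥ : IntermediateField ↥F₂ ↥A)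
      rw [htop] at hff
      rw [← hff]
      exact fun g => hfixA g
    obtain ⟨c, hc⟩ := IntermediateField.mem_bot.mp hbot
    have hxc : (x : Ω) = (c : Ω) := congrArg Subtype.val hc.symm
    refine ⟨x.2, ?_⟩
    show (x : Ω) ∈ F₂
    rw [hxc]
    exact c.2
  -- counting
  have hcard1 : Fintype.card (↥A ≃ₐ[↥F₂] ↥A) = finrank ↥F₂ ↥A :=
    Fintype.card_eq_nat_card.trans (IsGalois.card_aut_eq_finrank ↥F₂ ↥A)
  have hcard2 : finrank ↥(fixedField H) ↥F₁ = Nat.card H := by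
    exact finrank_fixedField_eq_card H
  have hcomap : finrank ↥((F₁ ⊓ F₂).comap F₁.val) ↥F₁ = relfinrank (F₁ ⊓ F₂) F₁ := by
    rw [finrank_comap, fieldRange_val]
  have hdvd : finrank ↥((F₁ ⊓ F₂).comap F₁.val) ↥F₁ ∣ finrank ↥(fixedField H) ↥F₁ :=
    Dvd.intro_left _ (relfinrank_mul_finrank_top hfixle)
  have hposH : 0 < finrank ↥(fixedField H) ↥F₁ := by
    rw [hcard2]; exact Nat.card_pos
  have hge : relfinrank (F₁ ⊓ F₂) F₁ ≤ relfinrank F₂ (F₁ ⊔ F₂) := by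
    rw [← hcomap]
    calc finrank ↥((F₁ ⊓ F₂).comap F₁.val) ↥F₁
        ≤ finrank ↥(fixedField H) ↥F₁ := Nat.le_of_dvd hposH hdvd
      _ = Nat.card H := hcard2
      _ ≤ Nat.card (↥A ≃ₐ[↥F₂] ↥A) :=
          Nat.card_le_card_of_surjective ρ.rangeRestrict ρ.rangeRestrict_surjective
      _ = finrank ↥F₂ ↥A := by rw [Nat.card_eq_fintype_card, hcard1]
      _ = relfinrank F₂ (F₁ ⊔ F₂) := by rw [relfinrank_eq_finrank_of_le h2E, hAE]
  -- the other inequality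
  haveI hfd1 : FiniteDimensional ↥(F₁ ⊓ F₂) ↥(extendScalars hK1) := by
    haveI : FiniteDimensional F₀ ↥(extendScalars hK1) :=
      inferInstanceAs (FiniteDimensional F₀ ↥F₁)
    exact FiniteDimensional.right F₀ ↥(F₁ ⊓ F₂) ↥(extendScalars hK1)
  haveI hfd2 : FiniteDimensional ↥(F₁ ⊓ F₂) ↥(extendScalars hK2) := by
    haveI : FiniteDimensional F₀ ↥(extendScalars hK2) :=
      inferInstanceAs (FiniteDimensional F₀ ↥F₂)
    exact FiniteDimensional.right F₀ ↥(F₁ ⊓ F₂) ↥(extendScalars hK2)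
  have hle : relfinrank F₂ (F₁ ⊔ F₂) ≤ relfinrank (F₁ ⊓ F₂) F₁ := by
    have e1 : relfinrank (F₁ ⊓ F₂) F₂ * relfinrank F₂ (F₁ ⊔ F₂)
        = relfinrank (F₁ ⊓ F₂) (F₁ ⊔ F₂) := relfinrank_mul_relfinrank hK2 h2E
    have e2 : relfinrank (F₁ ⊓ F₂) (F₁ ⊔ F₂)
        ≤ relfinrank (F₁ ⊓ F₂) F₁ * relfinrank (F₁ ⊓ F₂) F₂ := by
      rw [relfinrank_eq_finrank_of_le hKE, relfinrank_eq_finrank_of_le hK1,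
        relfinrank_eq_finrank_of_le hK2, ← extendScalars_sup hK1 hK2]
      exact finrank_sup_le _ _
    have hpos : 0 < relfinrank (F₁ ⊓ F₂) F₂ := by
      rw [relfinrank_eq_finrank_of_le hK2]
      exact finrank_pos
    have e3 : relfinrank (F₁ ⊓ F₂) F₂ * relfinrank F₂ (F₁ ⊔ F₂)
        ≤ relfinrank (F₁ ⊓ F₂) F₂ * relfinrank (F₁ ⊓ F₂) F₁ := by
      rw [e1]
      calc relfinrank (F₁ ⊓ F₂) (F₁ ⊔ F₂)
          ≤ relfinrank (F₁ ⊓ F₂) F₁ * relfinrank (F₁ ⊓ F₂) F₂ := e2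
        _ = relfinrank (F₁ ⊓ F₂) F₂ * relfinrank (F₁ ⊓ F₂) F₁ := mul_comm _ _
    exact Nat.le_of_mul_le_mul_left e3 hpos
  have core : relfinrank F₂ (F₁ ⊔ F₂) = relfinrank (F₁ ⊓ F₂) F₁ := le_antisymm hle hge
  -- assemble
  haveI hsepA : Algebra.IsSeparable ↥F₂ ↥(extendScalars h2E) := by
    rw [hAE]; exact IsGalois.to_isSeparable
  haveI : FiniteDimensional ↥F₂ ↥(extendScalars h2E) := by rw [hAE]; exact hfdA
  haveI : Algebra.IsAlgebraic ↥F₂ ↥(extendScalars h2E) := Algebra.IsAlgebraic.of_finite _ _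
  have hL : Field.finSepDegree F₀ ↥(F₁ ⊔ F₂)
      = Field.finSepDegree F₀ ↥F₂ * relfinrank F₂ (F₁ ⊔ F₂) := by
    rw [relfinrank_eq_finrank_of_le h2E,
      ← Field.finSepDegree_eq_finrank_of_isSeparable ↥F₂ ↥(extendScalars h2E),
      Field.finSepDegree_mul_finSepDegree_of_isAlgebraic F₀ ↥F₂ ↥(extendScalars h2E)]
    rfl
  have hR : Module.finrank F₀ ↥F₁
      = Module.finrank F₀ ↥(F₁ ⊓ F₂) * relfinrank (F₁ ⊓ F₂) F₁ :=
    (finrank_bot_mul_relfinrank hK1).symm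
  rw [hL, hR, core]
  ring
end

section
/- Let ℓ be a prime and N a positive integer with ℓ ∤ N. Then SL_2(ℤ/Nℤ) has no normal subgroup of index ℓ. -/
namespace Stmt7Aux

variable {N : ℕ}

/-- Upper unipotent matrix in `SL₂`. -/
def TT (a : ZMod N) : Matrix.SpecialLinearGroup (Fin 2) (ZMod N) :=
  ⟨!![1, a; 0, 1], by simp [Matrix.det_fin_two_of]⟩

/-- Lower unipotent matrix in `SL₂`. -/
def LL (a : ZMod N) : Matrix.SpecialLinearGroup (Fin 2) (ZMod N) :=
  ⟨!![1, 0; a, 1], by simp [Matrix.det_fin_two_of]⟩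

lemma TT_mul (a b : ZMod N) : TT a * TT b = TT (a + b) := by
  apply Subtype.ext
  rw [Matrix.SpecialLinearGroup.coe_mul]
  simp [TT, Matrix.mul_fin_two, add_comm]

lemma TT_zero : (TT 0 : Matrix.SpecialLinearGroup (Fin 2) (ZMod N)) = 1 := by
  apply Subtype.ext
  show _ = (1 : Matrix (Fin 2) (Fin 2) (ZMod N))
  rw [Matrix.one_fin_two]
  simp [TT]

lemma TT_pow (a : ZMod N) (n : ℕ) : TT a ^ n = TT ((n : ZMod N) * a) := by
  induction n with
  | zero => simp [TT_zero]
  | succ n ih =>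
    rw [pow_succ, ih, TT_mul]
    congr 1
    push_cast
    ring

lemma TT_pow_N (a : ZMod N) : TT a ^ N = 1 := by
  rw [TT_pow, ZMod.natCast_self, zero_mul, TT_zero]

lemma LL_mul (a b : ZMod N) : LL a * LL b = LL (a + b) := by
  apply Subtype.ext
  rw [Matrix.SpecialLinearGroup.coe_mul]
  simp [LL, Matrix.mul_fin_two, add_comm]

lemma LL_zero : (LL 0 : Matrix.SpecialLinearGroup (Fin 2) (ZMod N)) = 1 := by
  apply Subtype.ext
  show _ = (1 : Matrix (Fin 2) (Fin 2) (ZMod N))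
  rw [Matrix.one_fin_two]
  simp [LL]

lemma LL_pow (a : ZMod N) (n : ℕ) : LL a ^ n = LL ((n : ZMod N) * a) := by
  induction n with
  | zero => simp [LL_zero]
  | succ n ih =>
    rw [pow_succ, ih, LL_mul]
    congr 1
    push_cast
    ring

lemma LL_pow_N (a : ZMod N) : LL a ^ N = 1 := by
  rw [LL_pow, ZMod.natCast_self, zero_mul, LL_zero]

/-- Key arithmetic fact: if `a, c` are coprime in `ZMod N`, then some `a + x*c` is a unit. -/
lemma exists_unit (hN : 0 < N) (a c : ZMod N) (h : IsCoprime a c) :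
    ∃ x : ZMod N, IsUnit (a + x * c) := by
  haveI : NeZero N := ⟨hN.ne'⟩
  set A := a.val with hA
  set C := c.val with hC
  set x0 : ℕ := ∏ p ∈ N.primeFactors.filter (fun p => ¬ p ∣ A), p with hx0
  have hcop : Nat.Coprime (A + x0 * C) N := by
    rw [Nat.coprime_iff_gcd_eq_one]
    by_contra hg
    obtain ⟨p, hp, hpd⟩ := Nat.exists_prime_and_dvd hg
    have hp1 : p ∣ A + x0 * C := hpd.trans (Nat.gcd_dvd_left _ _)
    have hp2 : p ∣ N := hpd.trans (Nat.gcd_dvd_right _ _)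
    by_cases hpA : p ∣ A
    · have hxc : p ∣ x0 * C := by
        have h' := Nat.dvd_sub hp1 hpA
        simpa using h'
      rcases (Nat.Prime.dvd_mul hp).mp hxc with hx | hc
      · obtain ⟨q, hq, hpq⟩ := (Prime.dvd_finset_prod_iff hp.prime _).mp hx
        rw [Finset.mem_filter, Nat.mem_primeFactors] at hq
        have : p = q := (Nat.prime_dvd_prime_iff_eq hp hq.1.1).mp hpq
        exact hq.2 (this ▸ hpA)
      · -- p ∣ A, p ∣ C, p ∣ N : contradicts coprimality of a, c
        obtain ⟨u, v, huv⟩ := h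
        haveI : Fact p.Prime := ⟨hp⟩
        have ha0 : ((A : ZMod p)) = 0 := (ZMod.natCast_eq_zero_iff _ _).mpr hpA
        have hc0 : ((C : ZMod p)) = 0 := (ZMod.natCast_eq_zero_iff _ _).mpr hc
        have haA : ((A : ZMod N)) = a := by rw [hA, ZMod.natCast_val, ZMod.cast_id]
        have hcC : ((C : ZMod N)) = c := by rw [hC, ZMod.natCast_val, ZMod.cast_id]
        have := congrArg (ZMod.castHom hp2 (ZMod p)) huv
        rw [_root_.map_add, _root_.map_mul, _root_.map_mul, _root_.map_one, ← haA, ← hcC,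
          map_natCast, map_natCast, ha0, hc0, mul_zero, mul_zero, add_zero] at this
        exact zero_ne_one this
    · have hpm : p ∈ N.primeFactors.filter (fun p => ¬ p ∣ A) := by
        rw [Finset.mem_filter, Nat.mem_primeFactors]
        exact ⟨⟨hp, hp2, hN.ne'⟩, hpA⟩
      have hx : p ∣ x0 := Finset.dvd_prod_of_mem _ hpm
      have : p ∣ A := by
        have h' := Nat.dvd_sub hp1 (hx.mul_right C)
        simpa using h'
      exact hpA this
  refine ⟨(x0 : ZMod N), ?_⟩
  have : IsUnit (((A + x0 * C : ℕ)) : ZMod N) := (ZMod.isUnit_iff_coprime _ _).mpr hcop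
  have heq : (((A + x0 * C : ℕ)) : ZMod N) = a + (x0 : ZMod N) * c := by
    push_cast
    rw [hA, hC, ZMod.natCast_val, ZMod.natCast_val, ZMod.cast_id, ZMod.cast_id]
  rwa [heq] at this

/-- Every homomorphism from `SL₂(ℤ/Nℤ)` killing all unipotents is trivial. -/
lemma hom_trivial (hN : 0 < N) {M : Type*} [Monoid M]
    (f : Matrix.SpecialLinearGroup (Fin 2) (ZMod N) →* M)
    (hT : ∀ a, f (TT a) = 1) (hL : ∀ a, f (LL a) = 1)
    (A : Matrix.SpecialLinearGroup (Fin 2) (ZMod N)) : f A = 1 := by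
  set a := A.1 0 0 with ha
  set b := A.1 0 1 with hb
  set c := A.1 1 0 with hc
  set d := A.1 1 1 with hd
  have hdet : a * d - b * c = 1 := by
    have h2 := A.2
    rw [Matrix.det_fin_two] at h2
    exact h2
  have hco : IsCoprime a c := ⟨d, -b, by linear_combination hdet⟩
  obtain ⟨x, hx⟩ := exists_unit hN a c hco
  obtain ⟨u, hu⟩ := hx
  set v : ZMod N := ((u⁻¹ : (ZMod N)ˣ) : ZMod N) with hv'
  have hv : v * (a + x * c) = 1 := by rw [← hu, hv']; exact u.inv_mul
  have hA : (A : Matrix (Fin 2) (Fin 2) (ZMod N)) = !![a, b; c, d] := by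
    rw [ha, hb, hc, hd]
    exact (Matrix.etaExpand_eq (A : Matrix (Fin 2) (Fin 2) (ZMod N))).symm
  have key : A = TT (-x) * LL (c * v) * TT (a + x * c) * LL (-v) * TT (a + x * c) *
      TT (-1) * LL 1 * TT (-1) * TT (v * (b + x * d)) := by
    apply Subtype.ext
    simp only [Matrix.SpecialLinearGroup.coe_mul]
    simp only [Matrix.SpecialLinearGroup.coe_mul, hA, TT, LL, Matrix.SpecialLinearGroup.coe_mk,
      Matrix.mul_fin_two]
    ext i j
    fin_cases i <;> fin_cases j <;> simp
    · linear_combination (-x + 2*c*x - c^2*x^2*v + a - a*c*x*v) * hv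
    · linear_combination (-1 - d*x^2*v + c*x*v + 2*c*d*x^2*v - c^2*d*x^3*v^2 - b - b*x*v
        + 2*b*c*x*v - b*c^2*x^2*v^2 + a*d*x*v - a*c*d*x^2*v^2 + a*b*v - a*b*c*x*v^2) * hv
        + (-(x*v)) * hdet
    · linear_combination (1 - c + c^2*x*v + a*c*v) * hv
    · linear_combination (-d + d*x*v - c*v - c*d*x*v + c^2*d*x^2*v^2 + b*v - b*c*v
        + b*c^2*x*v^2 + a*c*d*x*v^2 + a*b*c*v^2) * hv + v * hdet
  rw [key]
  simp only [_root_.map_mul, hT, hL, mul_one, one_mul]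

end Stmt7Aux

/-- For a prime `ℓ` not dividing the positive integer `N`, the group `SL₂(ℤ/Nℤ)` has no
normal subgroup of index `ℓ`. -/
theorem stmt_7 (ℓ N : ℕ) (hℓ : ℓ.Prime) (hN : 0 < N) (h : ¬ ℓ ∣ N) :
    ∀ (K : Subgroup (Matrix.SpecialLinearGroup (Fin 2) (ZMod N))) [K.Normal],
      K.index ≠ ℓ := by
  intro K _ hK
  -- Bezout: 1 = s*N + t*ℓ over ℤ
  have hcop : Nat.Coprime ℓ N := (Nat.Prime.coprime_iff_not_dvd hℓ).mpr h
  have hbez : ∃ s t : ℤ, s * N + t * ℓ = 1 := by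
    have := Nat.gcd_eq_gcd_ab ℓ N
    exact ⟨Nat.gcdB ℓ N, Nat.gcdA ℓ N, by
      rw [Nat.coprime_iff_gcd_eq_one] at hcop
      push_cast [hcop] at this ⊢
      linarith⟩
  obtain ⟨s, t, hst⟩ := hbez
  -- every element g with g^N = 1 lies in K
  have hmem : ∀ g : Matrix.SpecialLinearGroup (Fin 2) (ZMod N), g ^ N = 1 → g ∈ K := by
    intro g hg
    have h1 : g ^ (ℓ : ℤ) ∈ K := by
      rw [zpow_natCast, ← hK]
      exact Subgroup.pow_index_mem K g
    have h2 : g = (g ^ (N : ℤ)) ^ s * (g ^ (ℓ : ℤ)) ^ t := by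
      rw [← _root_.zpow_mul, ← _root_.zpow_mul, ← zpow_add, mul_comm (N : ℤ) s,
        mul_comm (ℓ : ℤ) t, hst, zpow_one]
    rw [h2, zpow_natCast, hg, _root_.one_zpow, one_mul]
    exact Subgroup.zpow_mem K h1 t
  -- hence the quotient map kills all unipotents, so K = ⊤
  have hKtop : K = ⊤ := by
    rw [eq_top_iff]
    intro A _
    have := Stmt7Aux.hom_trivial hN (QuotientGroup.mk' K)
      (fun a => by
        rw [← QuotientGroup.eq_one_iff (G := Matrix.SpecialLinearGroup (Fin 2) (ZMod N))] at *
        exact (QuotientGroup.eq_one_iff _).mpr (hmem _ (Stmt7Aux.TT_pow_N a)))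
      (fun a => (QuotientGroup.eq_one_iff _).mpr (hmem _ (Stmt7Aux.LL_pow_N a))) A
    exact (QuotientGroup.eq_one_iff _).mp this
  rw [hKtop, Subgroup.index_top] at hK
  exact hℓ.one_lt.ne hK
end

section
/- Let q be a prime and e ≥ 1. Then the order of the abelianization of SL_2(ℤ/q^e ℤ) is a power of q. -/
open Matrix

section Transvections

variable {R : Type*} [CommRing R]

/-- The upper transvection `[[1, x], [0, 1]]` as an element of `SL₂(R)`. -/
def sl2E (x : R) : Matrix.SpecialLinearGroup (Fin 2) R :=
  ⟨!![1, x; 0, 1], by simp [Matrix.det_fin_two_of]⟩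

/-- The lower transvection `[[1, 0], [x, 1]]` as an element of `SL₂(R)`. -/
def sl2F (x : R) : Matrix.SpecialLinearGroup (Fin 2) R :=
  ⟨!![1, 0; x, 1], by simp [Matrix.det_fin_two_of]⟩

lemma sl2E_mul_sl2E (x y : R) : sl2E x * sl2E y = sl2E (x + y) := by
  apply Subtype.ext
  rw [Matrix.SpecialLinearGroup.coe_mul]
  simp [sl2E, Matrix.SpecialLinearGroup.coe_mul, Matrix.mul_fin_two, add_comm]

lemma sl2F_mul_sl2F (x y : R) : sl2F x * sl2F y = sl2F (x + y) := by
  apply Subtype.ext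
  rw [Matrix.SpecialLinearGroup.coe_mul]
  simp [sl2F, Matrix.SpecialLinearGroup.coe_mul, Matrix.mul_fin_two, add_comm]

lemma sl2E_zero : sl2E (0 : R) = 1 := by
  apply Subtype.ext
  simp [sl2E, Matrix.SpecialLinearGroup.coe_one, Matrix.one_fin_two]

lemma sl2F_zero : sl2F (0 : R) = 1 := by
  apply Subtype.ext
  simp [sl2F, Matrix.SpecialLinearGroup.coe_one, Matrix.one_fin_two]

lemma sl2E_pow (x : R) (n : ℕ) : sl2E x ^ n = sl2E ((n : R) * x) := by
  induction n with
  | zero => simp [sl2E_zero]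
  | succ n ih =>
    rw [pow_succ, ih, sl2E_mul_sl2E]
    push_cast
    ring_nf

lemma sl2F_pow (x : R) (n : ℕ) : sl2F x ^ n = sl2F ((n : R) * x) := by
  induction n with
  | zero => simp [sl2F_zero]
  | succ n ih =>
    rw [pow_succ, ih, sl2F_mul_sl2F]
    push_cast
    ring_nf

/-- The set of all transvections in `SL₂(R)`. -/
def sl2Transvections : Set (Matrix.SpecialLinearGroup (Fin 2) R) :=
  {g | ∃ x : R, g = sl2E x ∨ g = sl2F x}

/-- The key matrix decomposition when the lower-left entry is a unit. -/
lemma sl2_decomp (a b c d ci : R) (h1 : ci * c = 1) (h2 : a * d - b * c = 1) :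
    (!![a, b; c, d] : Matrix (Fin 2) (Fin 2) R) =
      !![1, -((1 - a) * ci); 0, 1] * !![1, 0; c, 1] *
        !![1, b + (1 - a) * ci * d; 0, 1] := by
  ext i j
  fin_cases i <;> fin_cases j <;>
    simp [Matrix.mul_apply, Fin.sum_univ_two]
  · linear_combination (1 - a) * h1
  · linear_combination ((1 - a) * ci * (1 - a) * d) * h1 - ((1 - a) * ci) * h2
  · linear_combination h2 - (1 - a) * d * h1

lemma mem_closure_of_unit_c (M : Matrix.SpecialLinearGroup (Fin 2) R)
    (h : IsUnit (M.1 1 0)) :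
    M ∈ Subgroup.closure (sl2Transvections (R := R)) := by
  obtain ⟨u, hu⟩ := h
  set a := M.1 0 0
  set b := M.1 0 1
  set c := M.1 1 0
  set d := M.1 1 1
  have h1 : (↑u⁻¹ : R) * c = 1 := by rw [← hu]; exact u.inv_mul
  have h2 : a * d - b * c = 1 := by
    have := M.2
    rwa [Matrix.det_fin_two] at this
  have hM : M = sl2E (-((1 - a) * ↑u⁻¹)) * sl2F c *
      sl2E (b + (1 - a) * ↑u⁻¹ * d) := by
    apply Subtype.ext
    have : M.1 = !![a, b; c, d] := (Matrix.eta_fin_two M.1)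
    rw [this]
    simp only [Matrix.SpecialLinearGroup.coe_mul, sl2E, sl2F]
    exact sl2_decomp a b c d _ h1 h2
  rw [hM]
  exact mul_mem (mul_mem (Subgroup.subset_closure ⟨_, Or.inl rfl⟩)
    (Subgroup.subset_closure ⟨_, Or.inr rfl⟩))
    (Subgroup.subset_closure ⟨_, Or.inl rfl⟩)

end Transvections

/-- For a prime `q` and `e ≥ 1`, the order of the abelianization of `SL₂(ℤ/qᵉℤ)` is a
power of `q`. -/
theorem stmt_8 (q e : ℕ) (hq : q.Prime) (he : 1 ≤ e) :
    ∃ k : ℕ, Nat.card (Abelianization (Matrix.SpecialLinearGroup (Fin 2) (ZMod (q ^ e)))) =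
      q ^ k := by
  haveI : NeZero (q ^ e) := ⟨pow_ne_zero e hq.pos.ne'⟩
  haveI : Fact q.Prime := ⟨hq⟩
  set R := ZMod (q ^ e)
  set G := Matrix.SpecialLinearGroup (Fin 2) R
  -- any non-unit of R is divisible by q
  have hnu : ∀ x : R, ¬IsUnit x → (q : R) ∣ x := by
    intro x hx
    have hxx : ((x.val : ℕ) : R) = x := ZMod.natCast_rightInverse x
    have hx' : ¬ (x.val).Coprime (q ^ e) := by
      intro hc
      exact hx (hxx ▸ (ZMod.isUnit_iff_coprime x.val (q ^ e)).mpr hc)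
    have : q ∣ x.val := by
      by_contra hdvd
      exact hx' ((Nat.coprime_pow_right_iff he _ _).mpr
        ((Nat.Prime.coprime_iff_not_dvd hq).mpr hdvd).symm)
    obtain ⟨t, ht⟩ := this
    refine ⟨(t : R), ?_⟩
    rw [← hxx, ht]
    rw [Nat.cast_mul]
  have hqnu : ¬ IsUnit ((q : R)) := by
    rw [show ((q : R)) = ((q : ℕ) : R) from rfl, ZMod.isUnit_iff_coprime]
    intro hc
    have h2 := (Nat.coprime_pow_right_iff he _ _).mp hc
    rw [Nat.Coprime, Nat.gcd_self] at h2
    exact hq.one_lt.ne' h2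
  -- in R, a*d - b*c = 1 implies a or c is a unit
  have hlocal : ∀ a b c d : R, a * d - b * c = 1 → IsUnit a ∨ IsUnit c := by
    intro a b c d h
    by_contra hcon
    push_neg at hcon
    obtain ⟨ha, hc⟩ := hcon
    obtain ⟨s, hs⟩ := hnu a ha
    obtain ⟨t, ht⟩ := hnu c hc
    apply hqnu
    apply isUnit_of_dvd_one
    rw [← h, hs, ht]
    exact ⟨s * d - b * t, by ring⟩
  -- SL₂(R) is generated by transvections
  have hgen : Subgroup.closure (sl2Transvections (R := R)) = ⊤ := by
    rw [eq_top_iff]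
    intro M _
    have h2 : M.1 0 0 * M.1 1 1 - M.1 0 1 * M.1 1 0 = 1 := by
      have := M.2
      rwa [Matrix.det_fin_two] at this
    rcases hlocal _ _ _ _ h2 with ha | hc
    · -- top-left is a unit: multiply by a lower transvection first
      obtain ⟨u, hu⟩ := ha
      set v : R := (1 - M.1 1 0) * ↑u⁻¹
      have hkey : IsUnit ((sl2F v * M).1 1 0) := by
        have : (sl2F v * M).1 1 0 = v * M.1 0 0 + M.1 1 0 := by
          rw [Matrix.SpecialLinearGroup.coe_mul]
          simp [sl2F, Matrix.SpecialLinearGroup.coe_mul, Matrix.mul_apply,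
            Fin.sum_univ_two]
        rw [this]
        have huv : (↑u⁻¹ : R) * M.1 0 0 = 1 := by rw [← hu]; exact u.inv_mul
        have : v * M.1 0 0 + M.1 1 0 = 1 := by
          simp only [v]
          calc (1 - M.1 1 0) * ↑u⁻¹ * M.1 0 0 + M.1 1 0
              = (1 - M.1 1 0) * (↑u⁻¹ * M.1 0 0) + M.1 1 0 := by ring
            _ = 1 := by rw [huv]; ring
        rw [this]; exact isUnit_one
      have hmem := mem_closure_of_unit_c (sl2F v * M) hkey
      have : M = sl2F (-v) * (sl2F v * M) := by
        rw [← mul_assoc, sl2F_mul_sl2F]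
        simp [sl2F_zero]
      rw [this]
      exact mul_mem (Subgroup.subset_closure ⟨_, Or.inr rfl⟩) hmem
    · exact mem_closure_of_unit_c M hc
  -- every transvection class in the abelianization is killed by q^e
  have hkill : ∀ x ∈ sl2Transvections (R := R),
      (Abelianization.of x) ^ (q ^ e) = 1 := by
    rintro _ ⟨x, rfl | rfl⟩
    · rw [← map_pow, sl2E_pow]
      rw [show (((q ^ e : ℕ) : R)) = 0 from ZMod.natCast_self _, zero_mul, sl2E_zero]
      exact _root_.map_one _
    · rw [← map_pow, sl2F_pow]
      rw [show (((q ^ e : ℕ) : R)) = 0 from ZMod.natCast_self _, zero_mul, sl2F_zero]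
      exact _root_.map_one _
  -- hence the abelianization is a q-group
  have hsurj : Function.Surjective (Abelianization.of : G → Abelianization G) :=
    fun a => Quotient.exists_rep a
  have htop : Subgroup.closure (Abelianization.of '' sl2Transvections (R := R)) = ⊤ := by
    rw [← MonoidHom.map_closure, hgen, ← MonoidHom.range_eq_map]
    exact MonoidHom.range_eq_top.mpr hsurj
  have hall : ∀ a : Abelianization G, a ^ (q ^ e) = 1 := by
    have hle : (⊤ : Subgroup (Abelianization G)) ≤
        (powMonoidHom (q ^ e) : Abelianization G →* Abelianization G).ker := by
      rw [← htop]
      refine (Subgroup.closure_le _).mpr ?_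
      rintro _ ⟨x, hx, rfl⟩
      exact MonoidHom.mem_ker.mpr (hkill x hx)
    intro a
    have := hle (Subgroup.mem_top a)
    simpa [MonoidHom.mem_ker, powMonoidHom] using this
  have hpg : IsPGroup q (Abelianization G) := fun a => ⟨e, hall a⟩
  exact hpg.exists_card_eq
end

section
/- Let F be a field of characteristic ≠ 3 containing a primitive cube root of unity, and β₁, β₂ ∈ F nonzero. If F(∛β₁) = F(∛β₂) for some fixed cube roots in an algebraic closure, then there exists ε ∈ {±1} such that β₁^ε β₂ is a cube in F. -/
open Polynomial

/-- If `a + b*r + c*r^2 = 0` and the minimal polynomial of `r` over `F` has degree 3,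
then `a = b = c = 0`. -/
lemma lin_indep3 {F K : Type*} [Field F] [Field K] [Algebra F K] {r : K}
    (hdeg : (minpoly F r).degree = 3) {a b c : F}
    (h : algebraMap F K a + algebraMap F K b * r + algebraMap F K c * r ^ 2 = 0) :
    a = 0 ∧ b = 0 ∧ c = 0 := by
  set P : F[X] := C a + C b * X + C c * X ^ 2 with hP
  have hv : aeval r P = 0 := by
    simp only [hP, map_add, map_mul, map_pow, aeval_C, aeval_X]
    simpa [Algebra.smul_def] using h
  have hP0 : P = 0 := by
    by_contra hne
    have hle : (minpoly F r).degree ≤ P.degree := minpoly.degree_le_of_ne_zero F r hne hv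
    have hdP : P.degree ≤ 2 := by rw [hP]; compute_degree
    rw [hdeg] at hle
    have : (3 : WithBot ℕ) ≤ 2 := le_trans hle hdP
    norm_num at this
  refine ⟨?_, ?_, ?_⟩
  · have := congrArg (fun p => Polynomial.coeff p 0) hP0
    simpa [hP, coeff_add, coeff_C, coeff_C_mul, coeff_X, coeff_X_pow] using this
  · have := congrArg (fun p => Polynomial.coeff p 1) hP0
    simpa [hP, coeff_add, coeff_C, coeff_C_mul, coeff_X, coeff_X_pow] using this
  · have := congrArg (fun p => Polynomial.coeff p 2) hP0
    simpa [hP, coeff_add, coeff_C, coeff_C_mul, coeff_X, coeff_X_pow] using this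

/-- Let `F` be a field of characteristic `≠ 3` containing a primitive cube root of unity,
and `β₁, β₂ ∈ F` nonzero. If `F(∛β₁) = F(∛β₂)` inside an algebraic closure, then there
exists `ε ∈ {±1}` such that `β₁^ε β₂` is a cube in `F`. -/
theorem stmt_10 (F : Type*) [Field F] (hchar : ringChar F ≠ 3)
    (ω : F) (hω : IsPrimitiveRoot ω 3)
    (β₁ β₂ : F) (hβ₁ : β₁ ≠ 0) (hβ₂ : β₂ ≠ 0)
    (r₁ r₂ : AlgebraicClosure F)
    (hr₁ : r₁ ^ 3 = algebraMap F (AlgebraicClosure F) β₁)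
    (hr₂ : r₂ ^ 3 = algebraMap F (AlgebraicClosure F) β₂)
    (heq : IntermediateField.adjoin F {r₁} = IntermediateField.adjoin F {r₂}) :
    ∃ ε : ℤ, (ε = 1 ∨ ε = -1) ∧ ∃ c : F, c ^ 3 = β₁ ^ ε * β₂ := by
  have hinj : Function.Injective (algebraMap F (AlgebraicClosure F)) :=
    (algebraMap F (AlgebraicClosure F)).injective
  -- characteristic fact
  have h3 : (3 : F) ≠ 0 := by
    intro h30
    have hdvd : ringChar F ∣ 3 := ringChar.dvd (by exact_mod_cast h30)
    exact hchar (((Nat.dvd_prime Nat.prime_three).mp hdvd).resolve_left CharP.ringChar_ne_one)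
  -- facts about ω
  have hω3 : ω ^ 3 = 1 := hω.pow_eq_one
  have hωne : ω ≠ 1 := hω.ne_one (by norm_num)
  have hωsum : ω ^ 2 + ω + 1 = 0 := by
    have h0 : (ω - 1) * (ω ^ 2 + ω + 1) = 0 := by linear_combination hω3
    rcases mul_eq_zero.mp h0 with h | h
    · exact absurd (sub_eq_zero.mp h) hωne
    · exact h
  by_cases hc : ∃ t : F, t ^ 3 = β₁
  · -- β₁ is a cube in F, so r₁ ∈ F and thus r₂ ∈ F.
    obtain ⟨t, ht⟩ := hc
    have ht0 : t ≠ 0 := fun h0 => hβ₁ (by rw [← ht, h0]; ring)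
    have htK : algebraMap F (AlgebraicClosure F) t ≠ 0 :=
      fun h0 => ht0 (hinj (by simpa using h0))
    set u : AlgebraicClosure F := r₁ / algebraMap F (AlgebraicClosure F) t with hu
    have hu3 : u ^ 3 = 1 := by
      rw [hu, div_pow, hr₁, ← ht, map_pow]
      exact div_self (pow_ne_zero 3 htK)
    set w : AlgebraicClosure F := algebraMap F (AlgebraicClosure F) ω with hw
    have hω3K : w ^ 3 = 1 := by rw [hw, ← map_pow, hω3, map_one]
    have hωsK : w ^ 2 + w + 1 = 0 := by
      have := congrArg (algebraMap F (AlgebraicClosure F)) hωsum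
      simpa [map_add, map_pow] using this
    have hfac : (u - 1) * (u - w) * (u - w ^ 2) = 0 := by
      linear_combination hu3 - u ^ 2 * hωsK + u * hωsK + u * hω3K - hω3K
    have hr1mem : r₁ ∈ Set.range (algebraMap F (AlgebraicClosure F)) := by
      have hru : r₁ = u * algebraMap F (AlgebraicClosure F) t := by
        rw [hu]; field_simp
      rcases mul_eq_zero.mp hfac with h12 | h
      · rcases mul_eq_zero.mp h12 with h | h
        · exact ⟨t, by rw [hru, sub_eq_zero.mp h, one_mul]⟩
        · exact ⟨ω * t, by rw [map_mul, hru, sub_eq_zero.mp h, hw]⟩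
      · exact ⟨ω ^ 2 * t, by rw [map_mul, map_pow, hru, sub_eq_zero.mp h, hw]⟩
    have hbot : IntermediateField.adjoin F {r₁} = ⊥ :=
      IntermediateField.adjoin_simple_eq_bot_iff.mpr (IntermediateField.mem_bot.mpr hr1mem)
    have hr2mem : r₂ ∈ (⊥ : IntermediateField F (AlgebraicClosure F)) := by
      rw [← hbot, heq]
      exact IntermediateField.mem_adjoin_simple_self F r₂
    obtain ⟨d, hd⟩ := IntermediateField.mem_bot.mp hr2mem
    have hd3 : d ^ 3 = β₂ := by
      apply hinj
      rw [map_pow, hd, hr₂]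
    exact ⟨1, Or.inl rfl, t * d, by rw [zpow_one, mul_pow, ht, hd3]⟩
  · -- β₁ is not a cube in F: X^3 - β₁ is irreducible.
    push_neg at hc
    have hirr : Irreducible (X ^ 3 - C β₁ : F[X]) :=
      X_pow_sub_C_irreducible_of_prime Nat.prime_three hc
    have hmonic : (X ^ 3 - C β₁ : F[X]).Monic := monic_X_pow_sub_C β₁ (by norm_num)
    have haev : aeval r₁ (X ^ 3 - C β₁ : F[X]) = 0 := by
      simp [hr₁]
    have hint : IsIntegral F r₁ := ⟨X ^ 3 - C β₁, hmonic, by rw [← aeval_def]; exact haev⟩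
    have hmin : minpoly F r₁ = X ^ 3 - C β₁ :=
      (minpoly.eq_of_irreducible_of_monic hirr haev hmonic).symm
    have hdeg : (minpoly F r₁).degree = 3 := by
      rw [hmin]; exact degree_X_pow_sub_C (by norm_num) β₁
    -- r₂ ∈ F(r₁): write r₂ = a + b r₁ + c r₁²
    have hr2mem : r₂ ∈ Algebra.adjoin F ({r₁} : Set (AlgebraicClosure F)) := by
      rw [← IntermediateField.adjoin_simple_toSubalgebra_of_isAlgebraic hint.isAlgebraic]
      show r₂ ∈ IntermediateField.adjoin F {r₁}
      rw [heq]
      exact IntermediateField.mem_adjoin_simple_self F r₂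
    rw [Algebra.adjoin_singleton_eq_range_aeval] at hr2mem
    obtain ⟨p, hp⟩ := hr2mem
    have hp' : aeval r₁ p = r₂ := hp
    set q : F[X] := p %ₘ (X ^ 3 - C β₁) with hqdef
    have hq : aeval r₁ q = r₂ := by
      have hmd := modByMonic_add_div p (X ^ 3 - C β₁)
      calc aeval r₁ q = aeval r₁ (q + (X ^ 3 - C β₁) * (p /ₘ (X ^ 3 - C β₁))) := by
            rw [map_add, map_mul, haev, zero_mul, add_zero]
        _ = aeval r₁ p := by rw [hqdef, hmd]
        _ = r₂ := hp'
    have hqd : q.natDegree < 3 := by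
      by_cases hq0 : q = 0
      · simp [hq0]
      · have := degree_modByMonic_lt p hmonic
        rw [degree_X_pow_sub_C (by norm_num) β₁] at this
        exact (natDegree_lt_iff_degree_lt hq0).mpr (by exact_mod_cast this)
    set a := q.coeff 0 with hadef
    set b := q.coeff 1 with hbdef
    set c := q.coeff 2 with hcdef
    have hsub : r₂ = algebraMap F (AlgebraicClosure F) a
        + algebraMap F (AlgebraicClosure F) b * r₁
        + algebraMap F (AlgebraicClosure F) c * r₁ ^ 2 := by
      rw [← hq, aeval_eq_sum_range' hqd]
      simp [Finset.sum_range_succ, Algebra.smul_def]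
      rfl
    -- Cube and extract coefficients
    have hcube : (algebraMap F (AlgebraicClosure F) a
        + algebraMap F (AlgebraicClosure F) b * r₁
        + algebraMap F (AlgebraicClosure F) c * r₁ ^ 2) ^ 3
        = algebraMap F (AlgebraicClosure F) β₂ := by rw [← hsub]; exact hr₂
    have key : algebraMap F (AlgebraicClosure F)
          (a ^ 3 + 6 * a * b * c * β₁ + b ^ 3 * β₁ + c ^ 3 * β₁ ^ 2 - β₂)
        + algebraMap F (AlgebraicClosure F)
          (3 * (a ^ 2 * b + a * c ^ 2 * β₁ + b ^ 2 * c * β₁)) * r₁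
        + algebraMap F (AlgebraicClosure F)
          (3 * (a ^ 2 * c + a * b ^ 2 + b * c ^ 2 * β₁)) * r₁ ^ 2 = 0 := by
      simp only [map_add, map_sub, map_mul, map_pow, map_ofNat]
      rw [← hr₁]
      linear_combination hcube
    obtain ⟨e0, e1, e2⟩ := lin_indep3 hdeg key
    have eq0 : a ^ 3 + 6 * a * b * c * β₁ + b ^ 3 * β₁ + c ^ 3 * β₁ ^ 2 = β₂ := by
      linear_combination e0
    have eq1 : a ^ 2 * b + a * c ^ 2 * β₁ + b ^ 2 * c * β₁ = 0 := by
      rcases mul_eq_zero.mp e1 with h | h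
      · exact absurd h h3
      · exact h
    have eq2 : a ^ 2 * c + a * b ^ 2 + b * c ^ 2 * β₁ = 0 := by
      rcases mul_eq_zero.mp e2 with h | h
      · exact absurd h h3
      · exact h
    -- r₂ is not in F, since otherwise r₁ ∈ F and β₁ would be a cube.
    have hr1notF : ∀ s : F, r₂ ≠ algebraMap F (AlgebraicClosure F) s := by
      intro s hs
      have hbot : IntermediateField.adjoin F {r₂} = ⊥ :=
        IntermediateField.adjoin_simple_eq_bot_iff.mpr
          (IntermediateField.mem_bot.mpr ⟨s, hs.symm⟩)
      have hmem : r₁ ∈ (⊥ : IntermediateField F (AlgebraicClosure F)) := by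
        rw [← hbot, ← heq]
        exact IntermediateField.mem_adjoin_simple_self F r₁
      obtain ⟨t, ht⟩ := IntermediateField.mem_bot.mp hmem
      exact hc t (hinj (by rw [map_pow, ht, hr₁]))
    have ha : a = 0 := by
      by_contra ha
      by_cases hcz : c = 0
      · have hb : b = 0 := by
          rw [hcz] at eq1
          have h1 : a ^ 2 * b = 0 := by linear_combination eq1
          rcases mul_eq_zero.mp h1 with h | h
          · exact absurd (pow_eq_zero_iff (by norm_num) |>.mp h) ha
          · exact h
        exact hr1notF a (by rw [hsub, hb, hcz]; simp)
      · have hkey : a * (b ^ 3 - β₁ * c ^ 3) = 0 := by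
          linear_combination b * eq2 - c * eq1
        have hb3 : b ^ 3 = β₁ * c ^ 3 := by
          rcases mul_eq_zero.mp hkey with h | h
          · exact absurd h ha
          · linear_combination sub_eq_zero.mp h
        exact hc (b / c) (by field_simp; linear_combination hb3)
    rw [ha] at eq0 eq1 eq2
    have hbc : b = 0 ∨ c = 0 := by
      have h1 : b ^ 2 * c * β₁ = 0 := by linear_combination eq1
      rcases mul_eq_zero.mp h1 with h | h
      · rcases mul_eq_zero.mp h with h' | h'
        · exact Or.inl (pow_eq_zero_iff (by norm_num) |>.mp h')
        · exact Or.inr h'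
      · exact absurd h hβ₁
    rcases hbc with hb | hcz
    · -- b = 0 : β₂ = c³ β₁²
      refine ⟨1, Or.inl rfl, β₁ * c, ?_⟩
      rw [zpow_one]
      rw [hb] at eq0
      have hc3 : c ^ 3 * β₁ ^ 2 = β₂ := by linear_combination eq0
      linear_combination β₁ * hc3
    · -- c = 0 : β₂ = b³ β₁
      refine ⟨-1, Or.inr rfl, b, ?_⟩
      rw [hcz] at eq0
      have hβ : b ^ 3 * β₁ = β₂ := by linear_combination eq0
      rw [zpow_neg, zpow_one]
      field_simp
      linear_combination hβ
end

section
/- Let F be a field with a valuation v with values in a divisible totally ordered abelian group, and let f(x) = x^n + c_1 x^{n-1} + ⋯ + c_n ∈ F[x] be monic of degree n ≥ 2 with v(n) = 0 (n invertible with valuation zero in F) and v(c_i) > (i/n)·v(c_n) for all 1 ≤ i ≤ n-1. Then v(Disc(f)) = (n-1)·v(c_n). -/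
open Polynomial Finset

section aux
variable {F : Type*} [Field F] {Γ : Type*} [AddCommGroup Γ] [LinearOrder Γ] [IsOrderedAddMonoid Γ]
variable {v : F → Γ}

lemma aux_v1 (hmul : ∀ a b : F, a ≠ 0 → b ≠ 0 → v (a * b) = v a + v b) : v 1 = 0 := by
  have h := hmul 1 1 one_ne_zero one_ne_zero
  rw [mul_one] at h
  exact (left_eq_add.mp h)

lemma aux_vneg1 (hmul : ∀ a b : F, a ≠ 0 → b ≠ 0 → v (a * b) = v a + v b) : v (-1 : F) = 0 := by
  have h := hmul (-1) (-1) (by norm_num) (by norm_num)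
  rw [neg_mul_neg, one_mul, aux_v1 hmul] at h
  rcases lt_trichotomy (v (-1 : F)) 0 with h1 | h1 | h1
  · exact absurd h.symm (ne_of_lt (add_neg h1 h1))
  · exact h1
  · exact absurd h.symm (ne_of_gt (add_pos h1 h1))

lemma aux_vneg (hmul : ∀ a b : F, a ≠ 0 → b ≠ 0 → v (a * b) = v a + v b)
    {a : F} (ha : a ≠ 0) : v (-a) = v a := by
  have h := hmul (-1) a (by norm_num) ha
  rw [neg_one_mul, aux_vneg1 hmul, zero_add] at h
  exact h

lemma aux_vpow (hmul : ∀ a b : F, a ≠ 0 → b ≠ 0 → v (a * b) = v a + v b)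
    {a : F} (ha : a ≠ 0) (k : ℕ) : v (a ^ k) = k • v a := by
  induction k with
  | zero => simpa using aux_v1 hmul
  | succ m ih =>
      rw [pow_succ, hmul _ _ (pow_ne_zero _ ha) ha, ih, succ_nsmul]

lemma aux_vprod (hmul : ∀ a b : F, a ≠ 0 → b ≠ 0 → v (a * b) = v a + v b)
    {ι : Type*} (s : Finset ι) (f : ι → F) (hf : ∀ i ∈ s, f i ≠ 0) :
    v (∏ i ∈ s, f i) = ∑ i ∈ s, v (f i) := by
  induction s using Finset.cons_induction with
  | empty => simpa using aux_v1 hmul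
  | cons a s ha ih =>
      rw [Finset.prod_cons, Finset.sum_cons,
        hmul _ _ (hf a (Finset.mem_cons_self a s))
          (Finset.prod_ne_zero_iff.mpr fun i hi => hf i (Finset.mem_cons_of_mem hi)),
        ih (fun i hi => hf i (Finset.mem_cons_of_mem hi))]

lemma aux_vnat (hmul : ∀ a b : F, a ≠ 0 → b ≠ 0 → v (a * b) = v a + v b)
    (hadd : ∀ a b : F, a ≠ 0 → b ≠ 0 → a + b ≠ 0 → min (v a) (v b) ≤ v (a + b))
    (m : ℕ) (hm : (m : F) ≠ 0) : 0 ≤ v (m : F) := by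
  induction m with
  | zero => simp at hm
  | succ k ih =>
      by_cases hk : (k : F) = 0
      · have : ((k + 1 : ℕ) : F) = 1 := by push_cast [hk]; ring
        rw [this, aux_v1 hmul]
      · have hk1 : ((k + 1 : ℕ) : F) = (k : F) + 1 := by push_cast; ring
        have h := hadd (k : F) 1 hk one_ne_zero (by rw [← hk1]; exact hm)
        rw [aux_v1 hmul] at h
        rw [hk1]
        exact le_trans (le_min (ih hk) le_rfl) h

lemma aux_add (hmul : ∀ a b : F, a ≠ 0 → b ≠ 0 → v (a * b) = v a + v b)
    (hadd : ∀ a b : F, a ≠ 0 → b ≠ 0 → a + b ≠ 0 → min (v a) (v b) ≤ v (a + b))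
    {a b : F} (ha : a ≠ 0) (hb : b = 0 ∨ (b ≠ 0 ∧ v a < v b)) :
    a + b ≠ 0 ∧ v (a + b) = v a := by
  rcases hb with hb | ⟨hb, hv⟩
  · simp [hb, ha]
  · have hne : a + b ≠ 0 := by
      intro h
      have : b = -a := by linear_combination h
      rw [this, aux_vneg hmul ha] at hv
      exact lt_irrefl _ hv
    refine ⟨hne, ?_⟩
    have h1 : v a ≤ v (a + b) := by
      have := hadd a b ha hb hne
      rwa [min_eq_left hv.le] at this
    rcases eq_or_lt_of_le h1 with h2 | h2
    · exact h2.symm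
    · exfalso
      have h3 : a = (a + b) + (-b) := by ring
      have h4 := hadd (a + b) (-b) hne (neg_ne_zero.mpr hb) (by rw [← h3]; exact ha)
      rw [← h3, aux_vneg hmul hb] at h4
      exact absurd h4 (not_le.mpr (lt_min h2 hv))

lemma aux_sum (hadd : ∀ a b : F, a ≠ 0 → b ≠ 0 → a + b ≠ 0 → min (v a) (v b) ≤ v (a + b))
    {ι : Type*} (s : Finset ι) (f : ι → F) (g : Γ)
    (h : ∀ i ∈ s, f i = 0 ∨ (f i ≠ 0 ∧ g < v (f i))) :
    (∑ i ∈ s, f i) = 0 ∨ ((∑ i ∈ s, f i) ≠ 0 ∧ g < v (∑ i ∈ s, f i)) := by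
  induction s using Finset.cons_induction with
  | empty => left; simp
  | cons a s ha ih =>
      rw [Finset.sum_cons]
      rcases h a (Finset.mem_cons_self a s) with h0 | ⟨hne, hv⟩
      · rw [h0, zero_add]
        exact ih (fun i hi => h i (Finset.mem_cons_of_mem hi))
      · rcases ih (fun i hi => h i (Finset.mem_cons_of_mem hi)) with hs0 | ⟨hsne, hsv⟩
        · rw [hs0, add_zero]; right; exact ⟨hne, hv⟩
        · by_cases hz : f a + ∑ i ∈ s, f i = 0
          · exact Or.inl hz
          · exact Or.inr ⟨hz, lt_of_lt_of_le (lt_min hv hsv) (hadd _ _ hne hsne hz)⟩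

lemma aux_add_sum (hmul : ∀ a b : F, a ≠ 0 → b ≠ 0 → v (a * b) = v a + v b)
    (hadd : ∀ a b : F, a ≠ 0 → b ≠ 0 → a + b ≠ 0 → min (v a) (v b) ≤ v (a + b))
    {ι : Type*} (s : Finset ι) (f : ι → F) {a : F} (ha : a ≠ 0)
    (h : ∀ i ∈ s, f i = 0 ∨ (f i ≠ 0 ∧ v a < v (f i))) :
    a + ∑ i ∈ s, f i ≠ 0 ∧ v (a + ∑ i ∈ s, f i) = v a :=
  aux_add hmul hadd ha (aux_sum hadd s f (v a) h)

end aux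

set_option maxHeartbeats 1000000 in
/-- Let `F` be a field with a valuation `v`, and `f(x) = x^n + c₁x^{n-1} + ⋯ + cₙ` monic of
degree `n ≥ 2` with `v(n) = 0` and `v(cᵢ) > (i/n)·v(cₙ)` for `1 ≤ i ≤ n-1` (stated
fraction-freely as `n • v(cᵢ) > i • v(cₙ)`). Then `v(Disc f) = (n-1) • v(cₙ)`, where the
discriminant is computed as the square of the product of differences of the roots. -/
theorem stmt_16 (F : Type*) [Field F] (Γ : Type*) [AddCommGroup Γ] [LinearOrder Γ] [IsOrderedAddMonoid Γ]
    (v : F → Γ)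
    (hmul : ∀ a b : F, a ≠ 0 → b ≠ 0 → v (a * b) = v a + v b)
    (hadd : ∀ a b : F, a ≠ 0 → b ≠ 0 → a + b ≠ 0 → min (v a) (v b) ≤ v (a + b))
    (n : ℕ) (hn : 2 ≤ n) (c : ℕ → F) (t : Fin n → F)
    (hnF : (n : F) ≠ 0) (hvn : v (n : F) = 0)
    (hcn : c n ≠ 0)
    (hci : ∀ i : ℕ, 1 ≤ i → i ≤ n - 1 → c i ≠ 0 → i • v (c n) < n • v (c i))
    (hroots : (X ^ n + ∑ i ∈ Finset.range n, C (c (i + 1)) * X ^ (n - (i + 1)) : F[X]) =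
      ∏ i : Fin n, (X - C (t i))) :
    (∏ p ∈ Finset.univ.filter (fun p : Fin n × Fin n => p.1 < p.2), (t p.1 - t p.2)) ^ 2 ≠ 0 ∧
      v ((∏ p ∈ Finset.univ.filter (fun p : Fin n × Fin n => p.1 < p.2),
          (t p.1 - t p.2)) ^ 2) = (n - 1) • v (c n) := by
  classical
  -- Step 1 : cₙ = ∏ (-tᵢ)
  have hprod : c n = ∏ i : Fin n, (-(t i)) := by
    have h0 := congrArg (eval 0) hroots
    simp only [eval_add, eval_pow, eval_X, eval_finset_sum, eval_mul, eval_C, eval_prod,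
      eval_sub, zero_sub] at h0
    rw [zero_pow (by omega), zero_add] at h0
    rw [Finset.sum_eq_single (n - 1)] at h0
    · rw [Nat.sub_add_cancel (by omega), Nat.sub_self, pow_zero, mul_one] at h0
      exact h0
    · intro j hj hne
      rw [zero_pow (by simp at hj; omega), mul_zero]
    · intro h; exact absurd (Finset.mem_range.mpr (by omega)) h
  have htne : ∀ i : Fin n, t i ≠ 0 := by
    intro i h
    have hne : (∏ i : Fin n, (-(t i))) ≠ 0 := by rw [← hprod]; exact hcn
    exact hne (Finset.prod_eq_zero (Finset.mem_univ i) (by rw [h, neg_zero]))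
  have hvcn : v (c n) = ∑ i : Fin n, v (t i) := by
    rw [hprod, aux_vprod hmul _ _ (fun i _ => neg_ne_zero.mpr (htne i))]
    exact Finset.sum_congr rfl fun i _ => aux_vneg hmul (htne i)
  -- root equations
  have hroot : ∀ i : Fin n,
      t i ^ n + ∑ k ∈ Finset.range n, c (k + 1) * t i ^ (n - (k + 1)) = 0 := by
    intro i
    have h := congrArg (eval (t i)) hroots
    simp only [eval_add, eval_pow, eval_X, eval_finset_sum, eval_mul, eval_C] at h
    rw [h, eval_prod]
    exact Finset.prod_eq_zero (Finset.mem_univ i) (by simp)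
  -- lower bound on root valuations
  have hge : ∀ i : Fin n, v (c n) ≤ n • v (t i) := by
    intro i
    by_contra hlt'
    push_neg at hlt'
    have hterm : ∀ k ∈ Finset.range n, c (k + 1) * t i ^ (n - (k + 1)) = 0 ∨
        (c (k + 1) * t i ^ (n - (k + 1)) ≠ 0 ∧
          n • v (t i) < v (c (k + 1) * t i ^ (n - (k + 1)))) := by
      intro k hk
      rw [Finset.mem_range] at hk
      by_cases hc : c (k + 1) = 0
      · left; rw [hc, zero_mul]
      · right
        refine ⟨mul_ne_zero hc (pow_ne_zero _ (htne i)), ?_⟩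
        rw [hmul _ _ hc (pow_ne_zero _ (htne i)), aux_vpow hmul (htne i)]
        by_cases hkn : k + 1 = n
        · rw [hkn, Nat.sub_self, zero_smul, add_zero]
          exact hlt'
        · have h1 : (k + 1) • v (c n) < n • v (c (k + 1)) :=
            hci (k + 1) (by omega) (by omega) hc
          apply lt_of_nsmul_lt_nsmul_right n
          calc n • (n • v (t i)) = (n * n) • v (t i) := (mul_smul n n _).symm
            _ = ((k + 1) * n + n * (n - (k + 1))) • v (t i) := by
                obtain ⟨m, rfl⟩ := Nat.exists_eq_add_of_lt hk
                congr 1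
                rw [show k + m + 1 - (k + 1) = m by omega]
                ring
            _ = (k + 1) • (n • v (t i)) + (n * (n - (k + 1))) • v (t i) := by
                rw [add_smul, mul_smul]
            _ < (k + 1) • v (c n) + (n * (n - (k + 1))) • v (t i) :=
                add_lt_add_left (nsmul_lt_nsmul_right (by omega) hlt') _
            _ < n • v (c (k + 1)) + (n * (n - (k + 1))) • v (t i) := add_lt_add_left h1 _
            _ = n • (v (c (k + 1)) + (n - (k + 1)) • v (t i)) := by rw [smul_add, mul_smul]
    have hts : t i ^ n = -(∑ k ∈ Finset.range n, c (k + 1) * t i ^ (n - (k + 1))) := by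
      linear_combination hroot i
    rcases aux_sum hadd (Finset.range n) _ (n • v (t i)) hterm with hs0 | ⟨hsne, hsv⟩
    · rw [hs0, neg_zero] at hts
      exact pow_ne_zero n (htne i) hts
    · have hv : v (t i ^ n) = v (∑ k ∈ Finset.range n, c (k + 1) * t i ^ (n - (k + 1))) := by
        rw [hts, aux_vneg hmul hsne]
      rw [aux_vpow hmul (htne i)] at hv
      rw [← hv] at hsv
      exact lt_irrefl _ hsv
  -- exact root valuations
  have hvt : ∀ i : Fin n, n • v (t i) = v (c n) := by
    have hsum : ∑ i : Fin n, (n • v (t i) - v (c n)) = 0 := by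
      rw [Finset.sum_sub_distrib, ← Finset.smul_sum, ← hvcn, Finset.sum_const,
        Finset.card_univ, Fintype.card_fin, sub_self]
    intro i
    have h := (Finset.sum_eq_zero_iff_of_nonneg
      (fun j _ => sub_nonneg.mpr (hge j))).mp hsum i (Finset.mem_univ i)
    exact sub_eq_zero.mp h
  -- derivative valuations
  have hderiv : ∀ i : Fin n,
      (∏ j ∈ Finset.univ.erase i, (t i - t j)) ≠ 0 ∧
        v (∏ j ∈ Finset.univ.erase i, (t i - t j)) = (n - 1) • v (t i) := by
    intro i
    have hfac : (X ^ n + ∑ i ∈ Finset.range n, C (c (i + 1)) * X ^ (n - (i + 1)) : F[X]) =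
        (X - C (t i)) * ∏ j ∈ Finset.univ.erase i, (X - C (t j)) :=
      hroots.trans (Finset.mul_prod_erase Finset.univ _ (Finset.mem_univ i)).symm
    have hd := congrArg (fun p => eval (t i) (derivative p)) hfac
    simp only [derivative_add, derivative_X_pow, derivative_sum, derivative_C_mul,
      derivative_mul, derivative_X_sub_C, derivative_C, eval_zero, zero_add, eval_add,
      eval_mul, eval_pow, eval_X, eval_C, eval_sub, eval_finset_sum, eval_prod, eval_one,
      one_mul, sub_self, zero_mul, add_zero, eval_natCast] at hd
    have hA : (n : F) * t i ^ (n - 1) ≠ 0 := mul_ne_zero hnF (pow_ne_zero _ (htne i))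
    have hvA : v ((n : F) * t i ^ (n - 1)) = (n - 1) • v (t i) := by
      rw [hmul _ _ hnF (pow_ne_zero _ (htne i)), hvn, zero_add, aux_vpow hmul (htne i)]
    have hterm : ∀ k ∈ Finset.range n,
        c (k + 1) * (((n - (k + 1) : ℕ) : F) * t i ^ (n - (k + 1) - 1)) = 0 ∨
        (c (k + 1) * (((n - (k + 1) : ℕ) : F) * t i ^ (n - (k + 1) - 1)) ≠ 0 ∧
          v ((n : F) * t i ^ (n - 1)) <
            v (c (k + 1) * (((n - (k + 1) : ℕ) : F) * t i ^ (n - (k + 1) - 1)))) := by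
      intro k hk
      rw [Finset.mem_range] at hk
      by_cases hc : c (k + 1) = 0
      · left; rw [hc, zero_mul]
      by_cases hcast : ((n - (k + 1) : ℕ) : F) = 0
      · left; rw [hcast, zero_mul, mul_zero]
      right
      have hkn : k + 1 < n := by
        have : (n - (k + 1) : ℕ) ≠ 0 := fun h => hcast (by rw [h, Nat.cast_zero])
        omega
      refine ⟨mul_ne_zero hc (mul_ne_zero hcast (pow_ne_zero _ (htne i))), ?_⟩
      rw [hvA, hmul _ _ hc (mul_ne_zero hcast (pow_ne_zero _ (htne i))),
        hmul _ _ hcast (pow_ne_zero _ (htne i)), aux_vpow hmul (htne i)]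
      have h2 : (n - 1) • v (t i) < v (c (k + 1)) + (n - (k + 1) - 1) • v (t i) := by
        apply lt_of_nsmul_lt_nsmul_right n
        calc n • ((n - 1) • v (t i)) = (n * (n - 1)) • v (t i) := (mul_smul _ _ _).symm
          _ = ((k + 1) * n + n * (n - (k + 1) - 1)) • v (t i) := by
              obtain ⟨m, hm⟩ := Nat.exists_eq_add_of_lt hkn
              congr 1
              rw [hm, show k + 1 + m + 1 - (k + 1) - 1 = m by omega,
                show k + 1 + m + 1 - 1 = k + 1 + m by omega]
              ring
          _ = (k + 1) • (n • v (t i)) + (n * (n - (k + 1) - 1)) • v (t i) := by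
              rw [add_smul, mul_smul]
          _ = (k + 1) • v (c n) + (n * (n - (k + 1) - 1)) • v (t i) := by rw [hvt i]
          _ < n • v (c (k + 1)) + (n * (n - (k + 1) - 1)) • v (t i) :=
              add_lt_add_left (hci (k + 1) (by omega) (by omega) hc) _
          _ = n • (v (c (k + 1)) + (n - (k + 1) - 1) • v (t i)) := by rw [smul_add, mul_smul]
      calc (n - 1) • v (t i) < v (c (k + 1)) + (n - (k + 1) - 1) • v (t i) := h2
        _ ≤ v (c (k + 1)) + (v ((n - (k + 1) : ℕ) : F) + (n - (k + 1) - 1) • v (t i)) := by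
            have h3 := aux_vnat hmul hadd (n - (k + 1)) hcast
            exact add_le_add_right (le_add_of_nonneg_left h3) _
    obtain ⟨h1, h2⟩ := aux_add_sum hmul hadd (Finset.range n) _ hA hterm
    rw [hd] at h1 h2
    rw [hvA] at h2
    exact ⟨h1, h2⟩
  have hdiff : ∀ i j : Fin n, i ≠ j → t i - t j ≠ 0 := by
    intro i j hij h
    exact (hderiv i).1 (Finset.prod_eq_zero
      (Finset.mem_erase.mpr ⟨hij.symm, Finset.mem_univ j⟩) h)
  have hvP : ∀ i : Fin n, ∑ j ∈ Finset.univ.erase i, v (t i - t j) = (n - 1) • v (t i) := by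
    intro i
    rw [← (hderiv i).2, aux_vprod hmul _ _
      (fun j hj => hdiff i j (Ne.symm (Finset.mem_erase.mp hj).1))]
  -- final assembly
  have hDne : (∏ p ∈ Finset.univ.filter (fun p : Fin n × Fin n => p.1 < p.2),
      (t p.1 - t p.2)) ≠ 0 :=
    Finset.prod_ne_zero_iff.mpr fun p hp =>
      hdiff p.1 p.2 (ne_of_lt (Finset.mem_filter.mp hp).2)
  refine ⟨pow_ne_zero _ hDne, ?_⟩
  rw [aux_vpow hmul hDne 2, aux_vprod hmul _ _
    (fun p hp => hdiff p.1 p.2 (ne_of_lt (Finset.mem_filter.mp hp).2))]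
  have key : ∑ i : Fin n, ∑ j ∈ Finset.univ.erase i, v (t i - t j) =
      2 • ∑ p ∈ Finset.univ.filter (fun p : Fin n × Fin n => p.1 < p.2),
        v (t p.1 - t p.2) := by
    have e1 : ∀ i : Fin n, ∑ j ∈ Finset.univ.erase i, v (t i - t j) =
        ∑ j : Fin n, if i ≠ j then v (t i - t j) else 0 := by
      intro i
      rw [← Finset.sum_filter, Finset.filter_ne]
    have hsplit : Finset.univ.filter (fun p : Fin n × Fin n => p.1 ≠ p.2) =
        Finset.univ.filter (fun p : Fin n × Fin n => p.1 < p.2) ∪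
          Finset.univ.filter (fun p : Fin n × Fin n => p.2 < p.1) := by
      ext p
      simp only [Finset.mem_filter, Finset.mem_union, Finset.mem_univ, true_and]
      exact ⟨fun h => h.lt_or_gt, fun h => h.elim ne_of_lt (fun h' => (ne_of_lt h').symm)⟩
    have hdisj : Disjoint (Finset.univ.filter (fun p : Fin n × Fin n => p.1 < p.2))
        (Finset.univ.filter (fun p : Fin n × Fin n => p.2 < p.1)) := by
      rw [Finset.disjoint_left]
      intro p hp hq
      exact absurd (Finset.mem_filter.mp hq).2 (not_lt.mpr (le_of_lt (Finset.mem_filter.mp hp).2))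
    have hswap : ∑ p ∈ Finset.univ.filter (fun p : Fin n × Fin n => p.2 < p.1),
        v (t p.1 - t p.2) =
        ∑ p ∈ Finset.univ.filter (fun p : Fin n × Fin n => p.1 < p.2),
          v (t p.1 - t p.2) := by
      refine Finset.sum_nbij' (fun p => (p.2, p.1)) (fun p => (p.2, p.1)) ?_ ?_ ?_ ?_ ?_
      · intro p hp
        simp only [Finset.mem_filter, Finset.mem_univ, true_and] at hp ⊢
        exact hp
      · intro p hp
        simp only [Finset.mem_filter, Finset.mem_univ, true_and] at hp ⊢
        exact hp
      · intro p _; rfl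
      · intro p _; rfl
      · intro p hp
        simp only [Finset.mem_filter, Finset.mem_univ, true_and] at hp
        have : t p.2 - t p.1 = -(t p.1 - t p.2) := by ring
        rw [this, aux_vneg hmul (hdiff p.1 p.2 (ne_of_gt hp))]
    calc ∑ i : Fin n, ∑ j ∈ Finset.univ.erase i, v (t i - t j)
        = ∑ i : Fin n, ∑ j : Fin n, if i ≠ j then v (t i - t j) else 0 :=
          Finset.sum_congr rfl fun i _ => e1 i
      _ = ∑ p : Fin n × Fin n, if p.1 ≠ p.2 then v (t p.1 - t p.2) else 0 := by
          rw [Fintype.sum_prod_type]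
      _ = ∑ p ∈ Finset.univ.filter (fun p : Fin n × Fin n => p.1 ≠ p.2),
            v (t p.1 - t p.2) := (Finset.sum_filter _ _).symm
      _ = _ := by
          rw [hsplit, Finset.sum_union hdisj, hswap, two_nsmul]
  have key2 : ∑ i : Fin n, ∑ j ∈ Finset.univ.erase i, v (t i - t j) = (n - 1) • v (c n) := by
    calc ∑ i : Fin n, ∑ j ∈ Finset.univ.erase i, v (t i - t j)
        = ∑ i : Fin n, (n - 1) • v (t i) := Finset.sum_congr rfl fun i _ => hvP i
      _ = (n - 1) • ∑ i : Fin n, v (t i) := (Finset.smul_sum).symm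
      _ = (n - 1) • v (c n) := by rw [← hvcn]
  rw [← key2, key]
end

section
/- Let F be a field of characteristic p ≥ 5 containing √3 and a primitive cube root of unity, equipped with a valuation v. Let f(x) = x^3 + c_1 x^2 + c_2 x + c_3 ∈ F[x] be irreducible with cyclic (degree 3) Galois group over F, and suppose v(c_1) > v(c_3)/3 and v(c_2) > 2v(c_3)/3. Then the splitting field of f over F is F(∛β) for some β ∈ F with v(β) = v(c_3). -/
open Polynomial

private lemma nsmul_lt_iff' {Γ : Type*} [AddCommGroup Γ] [LinearOrder Γ] [IsOrderedAddMonoid Γ] {a b : Γ} {n : ℕ}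
    (hn : n ≠ 0) : n • a < n • b ↔ a < b :=
  ⟨lt_of_nsmul_lt_nsmul_right n, nsmul_lt_nsmul_right hn⟩

private lemma nsmul_inj' {Γ : Type*} [AddCommGroup Γ] [LinearOrder Γ] [IsOrderedAddMonoid Γ] {a b : Γ} {n : ℕ}
    (hn : n ≠ 0) (h : n • a = n • b) : a = b := by
  rcases lt_trichotomy a b with h' | h' | h'
  · exact absurd h (ne_of_lt ((nsmul_lt_iff' hn).mpr h'))
  · exact h'
  · exact absurd h.symm (ne_of_lt ((nsmul_lt_iff' hn).mpr h'))

/-- Let `F` be a field of characteristic `p ≥ 5` containing `√3` and a primitive cube root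
of unity, with a valuation `v`. If `f = x³ + c₁x² + c₂x + c₃ ∈ F[x]` is irreducible with
cyclic Galois group of order `3`, and `v(c₁) > v(c₃)/3` and `v(c₂) > 2v(c₃)/3` (stated
fraction-freely), then the splitting field of `f` over `F` is generated by a cube root of
some `β ∈ F` with `v(β) = v(c₃)`. -/
theorem stmt_17 (F : Type*) [Field F] (p : ℕ) (hp : p.Prime) (hp5 : 5 ≤ p) [CharP F p]
    (sqrt3 : F) (hsqrt3 : sqrt3 ^ 2 = 3) (ω : F) (hω : IsPrimitiveRoot ω 3)
    (Γ : Type*) [AddCommGroup Γ] [LinearOrder Γ] [IsOrderedAddMonoid Γ] (v : F → Γ)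
    (hmul : ∀ a b : F, a ≠ 0 → b ≠ 0 → v (a * b) = v a + v b)
    (hadd : ∀ a b : F, a ≠ 0 → b ≠ 0 → a + b ≠ 0 → min (v a) (v b) ≤ v (a + b))
    (c₁ c₂ c₃ : F) (hc₃ : c₃ ≠ 0)
    (f : F[X]) (hf : f = X ^ 3 + C c₁ * X ^ 2 + C c₂ * X + C c₃)
    (hirr : Irreducible f) (hcyc : IsCyclic f.Gal) (hdeg : Nat.card f.Gal = 3)
    (hv₁ : c₁ ≠ 0 → v c₃ < 3 • v c₁)
    (hv₂ : c₂ ≠ 0 → 2 • v c₃ < 3 • v c₂) :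
    ∃ β : F, β ≠ 0 ∧ v β = v c₃ ∧
      ∃ r : f.SplittingField, r ^ 3 = algebraMap F f.SplittingField β ∧
        IntermediateField.adjoin F {r} = ⊤ := by
  classical
  haveI : Fact p.Prime := ⟨hp⟩
  ---------------------------------------------------------------- char facts
  have hnF : ∀ n : ℕ, 0 < n → n < 5 → (n : F) ≠ 0 := by
    intro n hn h5 h
    have hd : p ∣ n := (CharP.cast_eq_zero_iff F p n).mp h
    have := Nat.le_of_dvd hn hd
    omega
  have h2F : (2 : F) ≠ 0 := by exact_mod_cast hnF 2 (by norm_num) (by norm_num)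
  have h3F : (3 : F) ≠ 0 := by exact_mod_cast hnF 3 (by norm_num) (by norm_num)
  ---------------------------------------------------------------- valuation basics
  have v1 : v 1 = 0 := by
    have h := hmul 1 1 one_ne_zero one_ne_zero
    rw [mul_one] at h
    have : v (1 : F) + 0 = v 1 + v 1 := by rw [add_zero]; exact h
    exact (add_left_cancel this).symm
  have vpow : ∀ (a : F), a ≠ 0 → ∀ n : ℕ, v (a ^ n) = n • v a := by
    intro a ha n
    induction n with
    | zero => simpa using v1
    | succ n ih =>
      rw [pow_succ, hmul _ _ (pow_ne_zero n ha) ha, ih, succ_nsmul]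
  have vneg1 : v (-1 : F) = 0 := by
    have h := hmul (-1) (-1) (by norm_num) (by norm_num)
    norm_num at h
    have : (2 : ℕ) • v (-1 : F) = (2 : ℕ) • (0 : Γ) := by
      rw [two_nsmul, smul_zero, ← h, v1]
    exact nsmul_inj' (by norm_num) this
  have vneg : ∀ a : F, a ≠ 0 → v (-a) = v a := by
    intro a ha
    have h := hmul (-1) a (by norm_num) ha
    rw [neg_one_mul, vneg1, zero_add] at h
    exact h
  have vnat : ∀ n : ℕ, (n : F) ≠ 0 → v (n : F) = 0 := by
    intro n hn
    set g : ZMod p →+* F := ZMod.castHom dvd_rfl F with hg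
    have hzn : ((n : ZMod p)) ≠ 0 := by
      intro h
      apply hn
      have : g ((n : ZMod p)) = (n : F) := map_natCast g n
      rw [h, map_zero] at this
      exact this.symm
    have hfermat : ((n : F)) ^ (p - 1) = 1 := by
      have h1 : ((n : ZMod p)) ^ (p - 1) = 1 := ZMod.pow_card_sub_one_eq_one hzn
      have h2 : g (((n : ZMod p)) ^ (p - 1)) = ((n : F)) ^ (p - 1) := by
        rw [map_pow, map_natCast]
      rw [h1, map_one] at h2
      exact h2.symm
    have h3 : (p - 1) • v (n : F) = (p - 1) • (0 : Γ) := by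
      rw [smul_zero, ← vpow _ hn, hfermat, v1]
    exact nsmul_inj' (by omega) h3
  have vdom : ∀ a b : F, a ≠ 0 → (b = 0 ∨ (b ≠ 0 ∧ v a < v b)) →
      a + b ≠ 0 ∧ v (a + b) = v a := by
    intro a b ha hb
    rcases hb with rfl | ⟨hb, hab⟩
    · simpa using ha
    · have hne : a + b ≠ 0 := by
        intro h
        have hba : b = -a := eq_neg_of_add_eq_zero_right h
        rw [hba, vneg a ha] at hab
        exact lt_irrefl _ hab
      refine ⟨hne, ?_⟩
      have h1 : min (v a) (v b) ≤ v (a + b) := hadd a b ha hb hne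
      rw [min_eq_left hab.le] at h1
      have h3 : min (v (a + b)) (v (-b)) ≤ v ((a + b) + -b) :=
        hadd _ _ hne (neg_ne_zero.mpr hb) (by simpa using ha)
      rw [show (a + b) + -b = a by ring, vneg b hb] at h3
      rcases min_le_iff.mp h3 with h | h
      · exact le_antisymm h h1
      · exact absurd h (not_le.mpr hab)
  ---------------------------------------------------------------- F-side valuation computations
  have h3smul : ∀ x : Γ, (3 : ℕ) • x = x + x + x := fun x => by
    rw [show (3 : ℕ) = 2 + 1 by norm_num, add_nsmul, two_nsmul, one_nsmul]
  have h27F : (27 : F) ≠ 0 := by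
    have h : (27 : F) = 3 ^ 3 := by norm_num
    rw [h]; exact pow_ne_zero _ h3F
  have h9F : (9 : F) ≠ 0 := by
    have h : (9 : F) = 3 ^ 2 := by norm_num
    rw [h]; exact pow_ne_zero _ h3F
  have v2 : v (2 : F) = 0 := by simpa using vnat 2 (by exact_mod_cast h2F)
  have v9 : v (9 : F) = 0 := by simpa using vnat 9 (by exact_mod_cast h9F)
  have v27 : v (27 : F) = 0 := by simpa using vnat 27 (by exact_mod_cast h27F)
  -- the element S = β + β' and its valuation
  set S : F := -27 * c₃ + (9 * c₁ * c₂ - 2 * c₁ ^ 3) with hSdef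
  have hhead : (-27 : F) * c₃ ≠ 0 ∧ v ((-27 : F) * c₃) = v c₃ := by
    have hne : (-27 : F) * c₃ ≠ 0 := mul_ne_zero (neg_ne_zero.mpr h27F) hc₃
    refine ⟨hne, ?_⟩
    rw [hmul _ _ (neg_ne_zero.mpr h27F) hc₃, vneg _ h27F, v27, zero_add]
  have hT : (9 * c₁ * c₂ - 2 * c₁ ^ 3) = 0 ∨
      ((9 * c₁ * c₂ - 2 * c₁ ^ 3) ≠ 0 ∧ v ((-27 : F) * c₃) < v (9 * c₁ * c₂ - 2 * c₁ ^ 3)) := by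
    by_cases hc₁ : c₁ = 0
    · left; rw [hc₁]; ring
    · have hcub : v (-(2 * c₁ ^ 3)) = (3 : ℕ) • v c₁ := by
        rw [vneg _ (mul_ne_zero h2F (pow_ne_zero _ hc₁)),
          hmul _ _ h2F (pow_ne_zero _ hc₁), v2, zero_add, vpow _ hc₁]
      have hcubgt : v ((-27 : F) * c₃) < v (-(2 * c₁ ^ 3)) := by
        rw [hhead.2, hcub]; exact hv₁ hc₁
      by_cases hc₂ : c₂ = 0
      · right
        constructor
        · rw [hc₂]; intro h
          apply mul_ne_zero h2F (pow_ne_zero 3 hc₁)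
          have : (2 : F) * c₁ ^ 3 = -(9 * c₁ * 0 - 2 * c₁ ^ 3) := by ring
          rw [this, h, neg_zero]
        · rw [hc₂, show 9 * c₁ * 0 - 2 * c₁ ^ 3 = -(2 * c₁ ^ 3) by ring]
          exact hcubgt
      · -- both nonzero
        by_cases hT0 : (9 * c₁ * c₂ - 2 * c₁ ^ 3) = 0
        · left; exact hT0
        · right
          refine ⟨hT0, ?_⟩
          have h9cc : (9 : F) * c₁ * c₂ ≠ 0 := mul_ne_zero (mul_ne_zero h9F hc₁) hc₂
          have hv9cc : v (9 * c₁ * c₂) = v c₁ + v c₂ := by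
            rw [hmul _ _ (mul_ne_zero h9F hc₁) hc₂, hmul _ _ h9F hc₁, v9, zero_add]
          have hgt : v ((-27 : F) * c₃) < v (9 * c₁ * c₂) := by
            rw [hhead.2, hv9cc]
            have h1 := hv₁ hc₁
            have h2 := hv₂ hc₂
            have h3 : (3 : ℕ) • v c₃ < (3 : ℕ) • (v c₁ + v c₂) := by
              rw [smul_add]
              calc (3:ℕ) • v c₃ = v c₃ + (2:ℕ) • v c₃ := by
                    rw [h3smul, two_nsmul]; abel
                _ < (3:ℕ) • v c₁ + (3:ℕ) • v c₂ := add_lt_add h1 h2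
            exact (nsmul_lt_iff' (by norm_num) (n := 3)).mp h3
          have hmin : min (v (9 * c₁ * c₂)) (v (-(2 * c₁ ^ 3))) ≤ v (9 * c₁ * c₂ - 2 * c₁ ^ 3) := by
            have := hadd (9 * c₁ * c₂) (-(2 * c₁ ^ 3)) h9cc
              (neg_ne_zero.mpr (mul_ne_zero h2F (pow_ne_zero _ hc₁)))
              (by rw [show 9 * c₁ * c₂ + -(2 * c₁ ^ 3) = 9 * c₁ * c₂ - 2 * c₁ ^ 3 by ring]; exact hT0)
            rw [show 9 * c₁ * c₂ + -(2 * c₁ ^ 3) = 9 * c₁ * c₂ - 2 * c₁ ^ 3 by ring] at this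
            exact this
          calc v ((-27 : F) * c₃) < min (v (9 * c₁ * c₂)) (v (-(2 * c₁ ^ 3))) :=
                lt_min hgt hcubgt
            _ ≤ _ := hmin
  have hS : S ≠ 0 ∧ v S = v c₃ := by
    have := vdom ((-27 : F) * c₃) (9 * c₁ * c₂ - 2 * c₁ ^ 3) hhead.1
      hT
    rw [hSdef]
    exact ⟨this.1, by rw [this.2, hhead.2]⟩
  -- the element g with β * β' = g ^ 3
  set G : F := c₁ ^ 2 - 3 * c₂ with hGdef
  have hGv : G ≠ 0 → (2 : ℕ) • v c₃ < (3 : ℕ) • v G := by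
    intro hG0
    by_cases hc₁ : c₁ = 0
    · have hc₂ : c₂ ≠ 0 := by
        intro h; apply hG0; rw [hGdef, hc₁, h]; ring
      have : v G = v c₂ := by
        rw [hGdef, hc₁, show (0:F)^2 - 3 * c₂ = -(3 * c₂) by ring,
          vneg _ (mul_ne_zero h3F hc₂), hmul _ _ h3F hc₂,
          show v (3:F) = 0 by simpa using vnat 3 (by exact_mod_cast h3F), zero_add]
      rw [this]; exact hv₂ hc₂
    · by_cases hc₂ : c₂ = 0
      · have : v G = (2 : ℕ) • v c₁ := by
          rw [hGdef, hc₂, show c₁ ^ 2 - 3 * 0 = c₁ ^ 2 by ring, vpow _ hc₁]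
        rw [this, smul_comm]
        exact (nsmul_lt_iff' (n := 2) (by norm_num)).mpr (hv₁ hc₁)
      · have hsq : c₁ ^ 2 ≠ 0 := pow_ne_zero _ hc₁
        have h3c : (3 : F) * c₂ ≠ 0 := mul_ne_zero h3F hc₂
        have hmin : min (v (c₁ ^ 2)) (v (-(3 * c₂))) ≤ v G := by
          have := hadd (c₁ ^ 2) (-(3 * c₂)) hsq (neg_ne_zero.mpr h3c)
            (by rw [show c₁ ^ 2 + -(3 * c₂) = G by rw [hGdef]; ring]; exact hG0)
          rw [show c₁ ^ 2 + -(3 * c₂) = G by rw [hGdef]; ring] at this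
          exact this
        have h1 : (2 : ℕ) • v c₃ < (3 : ℕ) • v (c₁ ^ 2) := by
          rw [vpow _ hc₁, smul_comm]
          exact (nsmul_lt_iff' (n := 2) (by norm_num)).mpr (hv₁ hc₁)
        have h2 : (2 : ℕ) • v c₃ < (3 : ℕ) • v (-(3 * c₂)) := by
          rw [vneg _ h3c, hmul _ _ h3F hc₂,
            show v (3:F) = 0 by simpa using vnat 3 (by exact_mod_cast h3F), zero_add]
          exact hv₂ hc₂
        rcases min_le_iff.mp hmin with h | h
        · exact lt_of_lt_of_le h1 (nsmul_le_nsmul_right h 3)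
        · exact lt_of_lt_of_le h2 (nsmul_le_nsmul_right h 3)
  ---------------------------------------------------------------- splitting field setup
  set K := f.SplittingField with hKdef
  have φinj : Function.Injective (algebraMap F K) := (algebraMap F K).injective
  have hmonic : f.Monic := by rw [hf]; monicity!
  have hdeg3 : f.natDegree = 3 := by rw [hf]; compute_degree!
  have hdegne : f.degree ≠ 0 := by
    rw [degree_eq_natDegree hmonic.ne_zero, hdeg3]
    decide
  obtain ⟨r₁, hr₁₀⟩ := Splits.exists_eval_eq_zero (SplittingField.splits f) (by rwa [degree_map])
  have hr₁' : aeval r₁ f = 0 := by rwa [aeval_def, eval₂_eq_eval_map]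
  have hsep : f.Separable := by
    rw [separable_iff_derivative_ne_zero hirr]
    intro h
    have hco : (derivative f).coeff 2 = 3 := by
      rw [coeff_derivative]
      have h1 : f.coeff 3 = 1 := by
        have := hmonic
        rw [Monic, leadingCoeff, hdeg3] at this
        exact this
      rw [h1]
      norm_num
    rw [h, coeff_zero] at hco
    exact h3F hco.symm
  haveI : IsGalois F K := IsGalois.of_separable_splitting_field hsep
  have hrank : Module.finrank F K = 3 := by
    rw [← IsGalois.card_aut_eq_finrank]
    exact hdeg
  have eqTop : ∀ L : IntermediateField F K, Module.finrank F L = 3 → L = ⊤ := by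
    intro L hL
    have h2 : Module.finrank F L = Module.finrank F K := by rw [hL, hrank]
    have h4 : Module.finrank F (Subalgebra.toSubmodule L.toSubalgebra) = Module.finrank F K := by
      rw [Subalgebra.finrank_toSubmodule, IntermediateField.finrank_eq_finrank_subalgebra]
      exact h2
    have h6 : L.toSubalgebra = ⊤ := Algebra.toSubmodule_eq_top.mp (Submodule.eq_top_of_finrank_eq h4)
    apply IntermediateField.toSubalgebra_injective
    rw [h6, IntermediateField.top_toSubalgebra]
  have rootTop : ∀ r : K, aeval r f = 0 → IntermediateField.adjoin F {r} = ⊤ := by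
    intro r hr
    have hint : IsIntegral F r := ⟨f, hmonic, by rwa [← aeval_def]⟩
    apply eqTop
    rw [IntermediateField.adjoin.finrank hint, ← minpoly.eq_of_irreducible_of_monic hirr hr hmonic]
    exact hdeg3
  ---------------------------------------------------------------- the Galois group element
  obtain ⟨σ, hσ1⟩ : ∃ σ : f.Gal, σ ≠ 1 := by
    have h1 : Nontrivial f.Gal := Finite.one_lt_card_iff_nontrivial.mp (by rw [hdeg]; norm_num)
    exact exists_ne 1
  have hσ3 : σ ^ 3 = 1 := by rw [← hdeg]; exact pow_card_eq_one'
  have fixid : ∀ (r : K), aeval r f = 0 → ∀ τ : f.Gal, τ r = r → τ = 1 := by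
    intro r hr τ hτ
    have htop := rootTop r hr
    refine AlgEquiv.ext fun x => ?_
    have hx : x ∈ IntermediateField.adjoin F {r} := htop ▸ IntermediateField.mem_top
    show τ x = x
    induction hx using IntermediateField.adjoin_induction with
    | mem y hy =>
      rw [Set.mem_singleton_iff] at hy
      rw [hy]
      exact hτ
    | algebraMap y => exact AlgEquiv.commutes τ y
    | add y z hy hz ihy ihz => rw [map_add, ihy, ihz]
    | inv y hy ihy => rw [map_inv₀, ihy]
    | mul y z hy hz ihy ihz => rw [map_mul, ihy, ihz]
  set r₂ := σ r₁ with hr₂def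
  set r₃ := σ r₂ with hr₃def
  have haroot : ∀ x : K, aeval x f = 0 → aeval (σ x) f = 0 := by
    intro x hx
    rw [aeval_algHom_apply σ x f, hx, map_zero]
  have hr₂' : aeval r₂ f = 0 := haroot _ hr₁'
  have hr₃' : aeval r₃ f = 0 := haroot _ hr₂'
  have key3 : ∀ x : K, σ (σ (σ x)) = x := by
    intro x
    have h : (σ * (σ * σ)) = 1 := by rw [← hσ3, pow_succ, pow_succ, pow_one, mul_assoc]
    calc σ (σ (σ x)) = (σ * (σ * σ)) x := rfl
      _ = x := by rw [h]; rfl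
  have hr₁back : σ r₃ = r₁ := by rw [hr₃def, hr₂def]; exact key3 r₁
  have hσ2ne : σ ^ 2 ≠ 1 := by
    intro h
    apply hσ1
    calc σ = σ ^ 3 * (σ ^ 2)⁻¹ := by group
      _ = 1 := by rw [hσ3, h]; group
  have h12 : r₁ ≠ r₂ := fun h => hσ1 (fixid r₁ hr₁' σ h.symm)
  have h23 : r₂ ≠ r₃ := fun h => hσ1 (fixid r₂ hr₂' σ h.symm)
  have h13 : r₁ ≠ r₃ := by
    intro h
    apply hσ2ne
    apply fixid r₁ hr₁' (σ ^ 2)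
    show (σ ^ 2) r₁ = r₁
    calc (σ ^ 2) r₁ = σ (σ r₁) := rfl
      _ = r₁ := h.symm
  ---------------------------------------------------------------- Vieta
  have heval : ∀ x : K, aeval x f = 0 →
      x ^ 3 + algebraMap F K c₁ * x ^ 2 + algebraMap F K c₂ * x + algebraMap F K c₃ = 0 := by
    intro x hx
    simp only [hf, map_add, map_mul, map_pow, aeval_X, aeval_C] at hx
    exact hx
  have E₁ := heval _ hr₁'
  have E₂ := heval _ hr₂'
  have E₃ := heval _ hr₃'
  have d12 : r₁ - r₂ ≠ 0 := sub_ne_zero.mpr h12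
  have d13 : r₁ - r₃ ≠ 0 := sub_ne_zero.mpr h13
  have d23 : r₂ - r₃ ≠ 0 := sub_ne_zero.mpr h23
  have k12 : r₁ ^ 2 + r₁ * r₂ + r₂ ^ 2 + algebraMap F K c₁ * (r₁ + r₂) + algebraMap F K c₂ = 0 := by
    have h : (r₁ - r₂) * (r₁ ^ 2 + r₁ * r₂ + r₂ ^ 2 + algebraMap F K c₁ * (r₁ + r₂)
        + algebraMap F K c₂) = 0 := by linear_combination E₁ - E₂
    exact (mul_eq_zero.mp h).resolve_left d12
  have k13 : r₁ ^ 2 + r₁ * r₃ + r₃ ^ 2 + algebraMap F K c₁ * (r₁ + r₃) + algebraMap F K c₂ = 0 := by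
    have h : (r₁ - r₃) * (r₁ ^ 2 + r₁ * r₃ + r₃ ^ 2 + algebraMap F K c₁ * (r₁ + r₃)
        + algebraMap F K c₂) = 0 := by linear_combination E₁ - E₃
    exact (mul_eq_zero.mp h).resolve_left d13
  have e1 : r₁ + r₂ + r₃ = -(algebraMap F K c₁) := by
    have h : (r₂ - r₃) * (r₁ + r₂ + r₃ + algebraMap F K c₁) = 0 := by
      linear_combination k12 - k13
    have h2 := (mul_eq_zero.mp h).resolve_left d23
    linear_combination h2
  have e2 : r₁ * r₂ + r₁ * r₃ + r₂ * r₃ = algebraMap F K c₂ := by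
    linear_combination (r₁ + r₂) * e1 - k12
  have e3 : r₁ * r₂ * r₃ = -(algebraMap F K c₃) := by
    linear_combination E₁ - r₁ ^ 2 * e1 + r₁ * e2
  have ha₁ : algebraMap F K c₁ = -(r₁ + r₂ + r₃) := by linear_combination e1
  have ha₂ : algebraMap F K c₂ = r₁ * r₂ + r₁ * r₃ + r₂ * r₃ := e2.symm
  have ha₃ : algebraMap F K c₃ = -(r₁ * r₂ * r₃) := by linear_combination e3
  ---------------------------------------------------------------- cube root of unity in K
  have hω3 : ω ^ 3 = 1 := hω.pow_eq_one
  have hωne1 : ω ≠ 1 := hω.ne_one (by norm_num)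
  have hω2 : ω ^ 2 + ω + 1 = 0 := by
    have h : (ω - 1) * (ω ^ 2 + ω + 1) = 0 := by linear_combination hω3
    exact (mul_eq_zero.mp h).resolve_left (sub_ne_zero.mpr hωne1)
  set w := algebraMap F K ω with hwdef
  have hw3 : w ^ 3 = 1 := by rw [hwdef, ← map_pow, hω3, map_one]
  have hw2 : w ^ 2 + w + 1 = 0 := by
    have := congrArg (algebraMap F K) hω2
    simpa [map_add, map_pow, map_one, map_zero] using this
  have hwne1 : w ≠ 1 := fun h => hωne1 (φinj (by rw [← hwdef, h, map_one]))
  have hwne0 : w ≠ 0 := by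
    intro h
    rw [h] at hw3
    simpa using hw3
  have hw2ne1 : w ^ 2 ≠ 1 := by
    have hq : ω ^ 2 ≠ 1 := hω.pow_ne_one_of_pos_of_lt (by norm_num) (by norm_num)
    intro h
    apply hq
    apply φinj
    rw [map_pow, ← hwdef, h, map_one]
  ---------------------------------------------------------------- resolvents
  set δ := r₁ + w * r₂ + w ^ 2 * r₃ with hδdef
  set δ' := r₁ + w ^ 2 * r₂ + w * r₃ with hδ'def
  have hσw : σ w = w := AlgEquiv.commutes σ ω
  have hσδ : σ δ = w ^ 2 * δ := by
    rw [hδdef]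
    rw [map_add, map_add, map_mul, map_mul, map_pow, hσw, ← hr₂def, ← hr₃def, hr₁back]
    linear_combination (-(r₂ + w * r₃)) * hw3
  have hσδ' : σ δ' = w * δ' := by
    rw [hδ'def]
    rw [map_add, map_add, map_mul, map_mul, map_pow, hσw, ← hr₂def, ← hr₃def, hr₁back]
    linear_combination (-r₂) * hw3
  ---------------------------------------------------------------- fixed elements descend
  have horder : Subgroup.zpowers σ = ⊤ := by
    apply Subgroup.eq_top_of_card_eq
    rw [Nat.card_zpowers, hdeg]
    have h1 : orderOf σ ∣ 3 := hdeg ▸ orderOf_dvd_natCard σ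
    have h2 : orderOf σ ≠ 1 := fun h => hσ1 (orderOf_eq_one_iff.mp h)
    rcases (Nat.prime_three.eq_one_or_self_of_dvd _ h1) with h | h
    · exact absurd h h2
    · exact h
  have fixed_mem : ∀ x : K, σ x = x → ∃ y : F, algebraMap F K y = x := by
    intro x hx
    have hxn : ∀ n : ℕ, (σ ^ n) x = x := by
      intro n
      induction n with
      | zero => rw [pow_zero]; rfl
      | succ n ih =>
        rw [pow_succ]
        show (σ ^ n) (σ x) = x
        rw [hx, ih]
    have hmem : ∀ g : (⊤ : Subgroup (K ≃ₐ[F] K)), g • x = x := by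
      rintro ⟨g, -⟩
      have hgz : (g : K ≃ₐ[F] K) ∈ Subgroup.zpowers σ := horder ▸ Subgroup.mem_top g
      obtain ⟨n, hn⟩ := mem_powers_iff_mem_zpowers.mpr hgz
      show g x = x
      rw [← hn]
      exact hxn n
    have hbot : x ∈ (⊥ : IntermediateField F K) := by
      rw [← IsGalois.fixedField_fixingSubgroup (⊥ : IntermediateField F K),
        IntermediateField.fixingSubgroup_bot]
      exact hmem
    exact IntermediateField.mem_bot.mp hbot
  obtain ⟨b, hb⟩ := fixed_mem (δ ^ 3) (by
    rw [map_pow, hσδ]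
    linear_combination (δ ^ 3 * (w ^ 3 + 1)) * hw3)
  obtain ⟨b', hb'⟩ := fixed_mem (δ' ^ 3) (by
    rw [map_pow, hσδ']
    linear_combination δ' ^ 3 * hw3)
  ---------------------------------------------------------------- transport the identities to F
  have hsumK : δ ^ 3 + δ' ^ 3 = algebraMap F K S := by
    rw [hSdef]
    simp only [map_add, map_sub, map_mul, map_pow, map_neg, map_ofNat]
    rw [ha₁, ha₂, ha₃, hδdef, hδ'def]
    linear_combination (w^4*r₂^3 + w^4*r₃^3 - w^3*r₂^3 + 3*w^3*r₂^2*r₃ + 3*w^3*r₂*r₃^2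
      - w^3*r₃^3 + 3*w^2*r₁*r₂^2 + 3*w^2*r₁*r₃^2 - 3*w*r₁*r₂^2 + 12*w*r₁*r₂*r₃
      - 3*w*r₁*r₃^2 + 2*w*r₂^3 - 3*w*r₂^2*r₃ - 3*w*r₂*r₃^2 + 2*w*r₃^3 + 3*r₁^2*r₂
      + 3*r₁^2*r₃ + 3*r₁*r₂^2 - 12*r₁*r₂*r₃ + 3*r₁*r₃^2 - 2*r₂^3 + 3*r₂^2*r₃
      + 3*r₂*r₃^2 - 2*r₃^3) * hw2
  have hprodK : δ * δ' = algebraMap F K G := by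
    rw [hGdef]
    simp only [map_add, map_sub, map_mul, map_pow, map_neg, map_ofNat]
    rw [ha₁, ha₂, hδdef, hδ'def]
    linear_combination (w^2*r₂*r₃ + w*r₂^2 - w*r₂*r₃ + w*r₃^2 + r₁*r₂ + r₁*r₃
      - r₂^2 + r₂*r₃ - r₃^2) * hw2
  have hsumF : b + b' = S := φinj (by rw [map_add, hb, hb', hsumK])
  have hprodF : b * b' = G ^ 3 := φinj (by rw [map_mul, hb, hb', map_pow, ← hprodK]; ring)
  ---------------------------------------------------------------- finishing device
  have finishing : ∀ (b₀ : F) (d : K) (u : K), algebraMap F K b₀ = d ^ 3 → b₀ ≠ 0 →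
      v b₀ = v c₃ → σ d = u * d → u ≠ 1 →
      ∃ β : F, β ≠ 0 ∧ v β = v c₃ ∧ ∃ r : K, r ^ 3 = algebraMap F K β ∧
        IntermediateField.adjoin F {r} = ⊤ := by
    intro b₀ d u hb₀ hb₀ne hb₀v hσd hu
    have hdne : d ≠ 0 := by
      intro h
      apply hb₀ne
      apply φinj
      rw [hb₀, h, map_zero]
      ring
    have hσdne : σ d ≠ d := by
      rw [hσd]
      intro h
      exact hu (mul_right_cancel₀ hdne (h.trans (one_mul d).symm))
    have hnotbot : d ∉ (⊥ : IntermediateField F K) := by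
      intro hm
      obtain ⟨y, hy⟩ := IntermediateField.mem_bot.mp hm
      apply hσdne
      rw [← hy]
      exact AlgEquiv.commutes σ y
    refine ⟨b₀, hb₀ne, hb₀v, d, hb₀.symm, ?_⟩
    have hdvd : Module.finrank F (IntermediateField.adjoin F {d}) ∣ 3 := by
      refine ⟨Module.finrank (IntermediateField.adjoin F {d}) K, ?_⟩
      rw [← hrank, Module.finrank_mul_finrank]
    rcases (Nat.prime_three.eq_one_or_self_of_dvd _ hdvd) with h | h
    · exact absurd ((IntermediateField.finrank_eq_one_iff.mp h) ▸
        IntermediateField.mem_adjoin_simple_self F d) hnotbot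
    · exact eqTop _ h
  ---------------------------------------------------------------- case analysis
  by_cases hG0 : G = 0
  · have hδδ' : δ = 0 ∨ δ' = 0 := mul_eq_zero.mp (by rw [hprodK, hG0, map_zero])
    have hsub : δ - δ' ≠ 0 := by
      have h1 : δ - δ' = (w - w ^ 2) * (r₂ - r₃) := by rw [hδdef, hδ'def]; ring
      rw [h1]
      apply mul_ne_zero _ d23
      intro h
      apply hwne1
      have := mul_left_cancel₀ hwne0 (show w * 1 = w * w by linear_combination h)
      exact this.symm
    rcases hδδ' with h0 | h0
    · have hδ'ne : δ' ≠ 0 := by intro h; apply hsub; rw [h0, h]; ring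
      have hbzero : b = 0 := φinj (by rw [hb, h0, map_zero]; ring)
      have hb'S : b' = S := by
        have h := hsumF
        rw [hbzero, zero_add] at h
        exact h
      exact finishing b' δ' w hb' (hb'S ▸ hS.1) (hb'S ▸ hS.2) hσδ' hwne1
    · have hδne : δ ≠ 0 := by intro h; apply hsub; rw [h0, h]; ring
      have hb'zero : b' = 0 := φinj (by rw [hb', h0, map_zero]; ring)
      have hbS : b = S := by
        have h := hsumF
        rw [hb'zero, add_zero] at h
        exact h
      exact finishing b δ (w ^ 2) hb (hbS ▸ hS.1) (hbS ▸ hS.2) hσδ hw2ne1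
  · have hbne : b ≠ 0 := by
      intro h
      apply pow_ne_zero 3 hG0
      rw [← hprodF, h, zero_mul]
    have hb'ne : b' ≠ 0 := by
      intro h
      apply pow_ne_zero 3 hG0
      rw [← hprodF, h, mul_zero]
    have hvsum : v b + v b' = (3 : ℕ) • v G := by
      rw [← hmul _ _ hbne hb'ne, hprodF, vpow _ hG0]
    have hgt := hGv hG0
    have hsumne : b + b' ≠ 0 := by rw [hsumF]; exact hS.1
    have hminle : min (v b) (v b') ≤ v c₃ := by
      have h := hadd b b' hbne hb'ne hsumne
      rw [hsumF, hS.2] at h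
      exact h
    rcases lt_trichotomy (v b) (v b') with hlt | heq | hlt
    · have hv : v b = v c₃ := by
        have h := (vdom b b' hbne (Or.inr ⟨hb'ne, hlt⟩)).2
        rw [hsumF, hS.2] at h
        exact h.symm
      exact finishing b δ (w ^ 2) hb hbne hv hσδ hw2ne1
    · exfalso
      have h1 : (2 : ℕ) • v b = (3 : ℕ) • v G := by rw [two_nsmul, ← hvsum, heq]
      have h2 : (2 : ℕ) • v c₃ < (2 : ℕ) • v b := by rw [h1]; exact hgt
      have h3 : v c₃ < v b := (nsmul_lt_iff' (by norm_num)).mp h2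
      rw [min_eq_left heq.le] at hminle
      exact absurd hminle (not_le.mpr h3)
    · have hv : v b' = v c₃ := by
        have h := (vdom b' b hb'ne (Or.inr ⟨hbne, hlt⟩)).2
        rw [add_comm, hsumF, hS.2] at h
        exact h.symm
      exact finishing b' δ' w hb' hb'ne hv hσδ' hwne1
end
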